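/- arXiv:1811.07219 — 4 statements merged into one kernel-verified Lean document; each statement's English description precedes it below -/
import Mathlib

section
/- Under the stated assumptions, the recurrence coefficients of the deformed monic matrix-valued orthogonal polynomials satisfy the non-abelian Toda lattice equations: for every t ∈ I, (d/dt)C_n(t) = Λ (C_n(t) B_{n−1}(t) − B_n(t) C_n(t)) for all n ≥ 1, and (d/dt)B_n(t) = Λ (C_n(t) − C_{n+1}(t)) for all n ≥ 0, where C_0(t) := 0. -/
open Polynomial Matrix MeasureTheory
open scoped ComplexOrder

/-- Evaluation of a matrix-valued polynomial at a real point. -/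
noncomputable def evalM {N : ℕ} (P : Polynomial (Matrix (Fin N) (Fin N) ℂ)) (x : ℝ) :
    Matrix (Fin N) (Fin N) ℂ :=
  Polynomial.eval ((x : ℂ) • (1 : Matrix (Fin N) (Fin N) ℂ)) P

/-- The deformed weight `e^{-xtΛ} W(x)`. -/
noncomputable def defWeight {N : ℕ} (Λ : Matrix (Fin N) (Fin N) ℂ)
    (W : ℝ → Matrix (Fin N) (Fin N) ℂ) (t x : ℝ) : Matrix (Fin N) (Fin N) ℂ :=
  NormedSpace.exp ((-((x : ℂ) * (t : ℂ))) • Λ) * W x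

namespace TodaAux

attribute [local instance] Matrix.linftyOpNormedAddCommGroup Matrix.linftyOpNormedRing
  Matrix.linftyOpNormedAlgebra

variable {N : ℕ}

local notation "M" => Matrix (Fin N) (Fin N) ℂ

lemma central (x : ℝ) (A : M) : Commute A ((x : ℂ) • (1 : M)) := by
  unfold Commute SemiconjBy
  rw [Matrix.mul_smul, Matrix.smul_mul, mul_one, one_mul]

lemma evalM_eq (p : Polynomial M) (x : ℝ) :
    evalM p x = Polynomial.eval₂ (RingHom.id M) ((x : ℂ) • (1 : M)) p := rfl

lemma evalM_add (p q : Polynomial M) (x : ℝ) : evalM (p + q) x = evalM p x + evalM q x := by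
  simp [evalM, Polynomial.eval_add]

lemma evalM_mul (p q : Polynomial M) (x : ℝ) : evalM (p * q) x = evalM p x * evalM q x := by
  rw [evalM_eq, evalM_eq, evalM_eq]
  exact Polynomial.eval₂_mul_noncomm (RingHom.id _) _ (fun k => central x _)

lemma evalM_C (A : M) (x : ℝ) : evalM (Polynomial.C A) x = A := by simp [evalM]

lemma evalM_X (x : ℝ) : evalM (Polynomial.X : Polynomial M) x = (x : ℂ) • 1 := by simp [evalM]

lemma evalM_C_mul (A : M) (p : Polynomial M) (x : ℝ) :
    evalM (Polynomial.C A * p) x = A * evalM p x := by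
  rw [evalM_mul, evalM_C]

lemma evalM_X_mul (p : Polynomial M) (x : ℝ) :
    evalM (Polynomial.X * p) x = (x : ℂ) • evalM p x := by
  rw [evalM_mul, evalM_X, Matrix.smul_mul, one_mul]

lemma evalM_apply {d : ℕ} {p : Polynomial M} (hp : p.natDegree ≤ d) (x : ℝ) (i j : Fin N) :
    evalM p x i j = ∑ k ∈ Finset.range (d + 1), (x : ℂ) ^ k * p.coeff k i j := by
  rw [evalM, Polynomial.eval_eq_sum_range' (Nat.lt_succ_of_le hp)]
  rw [Matrix.sum_apply]
  refine Finset.sum_congr rfl fun k _ => ?_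
  rw [_root_.smul_pow, one_pow, mul_smul_comm, mul_one, Matrix.smul_apply, smul_eq_mul]

/-! ### Exponential lemmas -/

lemma pow_herm {Λ Wx : M} (h : Λ * Wx = Wx * Λᴴ) : ∀ n : ℕ, Λ ^ n * Wx = Wx * Λᴴ ^ n := by
  intro n
  induction n with
  | zero => simp
  | succ n ih =>
    rw [pow_succ, pow_succ, mul_assoc, h, ← mul_assoc, ih, mul_assoc]

lemma exp_smul_comm {Λ Wx : M} (h : Λ * Wx = Wx * Λᴴ) (a : ℂ) :
    NormedSpace.exp (a • Λ) * Wx = Wx * NormedSpace.exp (a • Λᴴ) := by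
  simp only [NormedSpace.exp_eq_tsum ℂ]
  have hs : Summable (fun n : ℕ => ((n.factorial : ℂ)⁻¹) • (a • Λ) ^ n) :=
    NormedSpace.expSeries_summable' (𝕂 := ℂ) _
  have hs' : Summable (fun n : ℕ => ((n.factorial : ℂ)⁻¹) • (a • Λᴴ) ^ n) :=
    NormedSpace.expSeries_summable' (𝕂 := ℂ) _
  rw [← hs.tsum_mul_right, ← hs'.tsum_mul_left]
  refine tsum_congr fun n => ?_
  rw [smul_mul_assoc, mul_smul_comm, _root_.smul_pow, _root_.smul_pow, smul_mul_assoc,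
    mul_smul_comm, pow_herm h n]

lemma comm_exp (Λ : M) (a : ℂ) :
    Λ * NormedSpace.exp (a • Λ) = NormedSpace.exp (a • Λ) * Λ :=
  ((Commute.refl Λ).smul_right a).exp_right

lemma defWeight_herm {Λ : M} {W : ℝ → M} {t x : ℝ} (hW : (W x).IsHermitian)
    (h : Λ * W x = W x * Λᴴ) : (defWeight Λ W t x)ᴴ = defWeight Λ W t x := by
  rw [defWeight, conjTranspose_mul, ← Matrix.exp_conjTranspose, conjTranspose_smul, hW]
  have hstar : (star (-((x : ℂ) * (t : ℂ)))) = -((x : ℂ) * (t : ℂ)) := by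
    simp [Complex.star_def, ← Complex.ofReal_mul]
  rw [hstar, ← exp_smul_comm h]

lemma entry_norm_le (A : M) (i j : Fin N) : ‖A i j‖ ≤ ‖A‖ := by
  have h : ‖A i j‖₊ ≤ ‖A‖₊ := by
    rw [Matrix.linfty_opNNNorm_def]
    exact le_trans (Finset.single_le_sum (f := fun c => ‖A i c‖₊) (fun c _ => zero_le)
      (Finset.mem_univ j)) (Finset.le_sup (f := fun i => ∑ j, ‖A i j‖₊) (Finset.mem_univ i))
  exact_mod_cast h

/-- Entry evaluation as a continuous linear map. -/
noncomputable def entryCLM (i j : Fin N) : M →L[ℝ] ℂ :=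
  LinearMap.mkContinuous (Matrix.entryLinearMap ℝ ℂ i j) 1
    (fun A => by simpa using entry_norm_le A i j)

lemma hasDerivAt_matrix {f : ℝ → M} {f' : M} {t : ℝ} (h : HasDerivAt f f' t) (i j : Fin N) :
    HasDerivAt (fun s => f s i j) (f' i j) t :=
  (entryCLM i j).hasFDerivAt.comp_hasDerivAt t h

lemma hasDerivAt_exp_entry (Λ : M) (x t : ℝ) (a b : Fin N) :
    HasDerivAt (fun s : ℝ => NormedSpace.exp ((-((x : ℂ) * (s : ℂ))) • Λ) a b)
      (((-(x : ℂ)) • (Λ * NormedSpace.exp ((-((x : ℂ) * (t : ℂ))) • Λ))) a b) t := by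
  have key : ∀ s : ℝ, NormedSpace.exp ((-((x : ℂ) * (s : ℂ))) • Λ)
      = NormedSpace.exp (s • ((-(x : ℂ)) • Λ)) := by
    intro s
    congr 1
    rw [← smul_assoc]
    congr 1
    rw [Complex.real_smul]
    push_cast
    ring
  have h := hasDerivAt_exp_smul_const (𝕂 := ℝ) ((-(x : ℂ)) • Λ) t
  have h2 : NormedSpace.exp (t • ((-(x : ℂ)) • Λ)) * ((-(x : ℂ)) • Λ)
      = (-(x : ℂ)) • (Λ * NormedSpace.exp ((-((x : ℂ) * (t : ℂ))) • Λ)) := by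
    rw [← key t, mul_smul_comm, comm_exp]
  replace h := h.congr_deriv h2
  have h3 := hasDerivAt_matrix h a b
  refine h3.congr_of_eventuallyEq ?_
  filter_upwards with s
  rw [key s]
  rfl

lemma hasDerivAt_defWeight_entry (Λ : M) (W : ℝ → M) (x t : ℝ) (a b : Fin N) :
    HasDerivAt (fun s : ℝ => defWeight Λ W s x a b)
      (((-(x : ℂ)) • (Λ * defWeight Λ W t x)) a b) t := by
  have key : ∀ s : ℝ, defWeight Λ W s x a b
      = ∑ c, NormedSpace.exp ((-((x : ℂ) * (s : ℂ))) • Λ) a c * W x c b := by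
    intro s; rw [defWeight, Matrix.mul_apply]
  have h : HasDerivAt (fun s : ℝ =>
      ∑ c, NormedSpace.exp ((-((x : ℂ) * (s : ℂ))) • Λ) a c * W x c b)
      (∑ c, ((-(x : ℂ)) • (Λ * NormedSpace.exp ((-((x : ℂ) * (t : ℂ))) • Λ))) a c * W x c b)
      t := HasDerivAt.fun_sum fun c _ => (hasDerivAt_exp_entry Λ x t a c).mul_const _
  have h2 : (∑ c, ((-(x : ℂ)) • (Λ * NormedSpace.exp ((-((x : ℂ) * (t : ℂ))) • Λ))) a c * W x c b)
      = ((-(x : ℂ)) • (Λ * defWeight Λ W t x)) a b := by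
    rw [← Matrix.mul_apply, Matrix.smul_mul, mul_assoc]
    rfl
  rw [h2] at h
  exact h.congr_of_eventuallyEq (by filter_upwards with s; rw [key s])

end TodaAux
section SIntSec

open TodaAux

variable {N : ℕ} (Λ : Matrix (Fin N) (Fin N) ℂ) (W : ℝ → Matrix (Fin N) (Fin N) ℂ)
  (μ : MeasureTheory.Measure ℝ)

local notation "M" => Matrix (Fin N) (Fin N) ℂ

/-- The matrix-valued bilinear pairing. -/
noncomputable def SInt (p q : Polynomial M) (t : ℝ) : M :=
  Matrix.of fun i j => ∫ x : ℝ,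
    (evalM p x * defWeight Λ W t x * (evalM q x)ᴴ) i j ∂μ

variable {t : ℝ}

lemma SInt_apply (p q : Polynomial M) (i j : Fin N) :
    SInt Λ W μ p q t i j
      = ∫ x : ℝ, (evalM p x * defWeight Λ W t x * (evalM q x)ᴴ) i j ∂μ := rfl

variable (hmt : ∀ (k : ℕ) (i j : Fin N),
    MeasureTheory.Integrable (fun x : ℝ => (x : ℂ) ^ k * defWeight Λ W t x i j) μ)

section
include hmt

lemma integrable_entry (p q : Polynomial M) (i j : Fin N) :
    MeasureTheory.Integrable
      (fun x : ℝ => (evalM p x * defWeight Λ W t x * (evalM q x)ᴴ) i j) μ := by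
  induction p using Polynomial.induction_on' with
  | add p p' hp hp' =>
    have : (fun x : ℝ => (evalM (p + p') x * defWeight Λ W t x * (evalM q x)ᴴ) i j)
        = fun x : ℝ => (evalM p x * defWeight Λ W t x * (evalM q x)ᴴ) i j
          + (evalM p' x * defWeight Λ W t x * (evalM q x)ᴴ) i j := by
      funext x
      rw [evalM_add, add_mul, add_mul, Matrix.add_apply]
    rw [this]; exact hp.add hp'
  | monomial k A =>
    induction q using Polynomial.induction_on' with
    | add q q' hq hq' =>
      have : (fun x : ℝ => (evalM (Polynomial.monomial k A) x * defWeight Λ W t x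
            * (evalM (q + q') x)ᴴ) i j)
          = fun x : ℝ => (evalM (Polynomial.monomial k A) x * defWeight Λ W t x
              * (evalM q x)ᴴ) i j
            + (evalM (Polynomial.monomial k A) x * defWeight Λ W t x * (evalM q' x)ᴴ) i j := by
        funext x
        rw [evalM_add, Matrix.conjTranspose_add, mul_add, Matrix.add_apply]
      rw [this]; exact hq.add hq'
    | monomial l B =>
      have key : (fun x : ℝ => (evalM (Polynomial.monomial k A) x * defWeight Λ W t x
            * (evalM (Polynomial.monomial l B) x)ᴴ) i j)
          = fun x : ℝ => ∑ b : Fin N, ∑ a : Fin N,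
              (A i a * star (B j b)) * ((x : ℂ) ^ (k + l) * defWeight Λ W t x a b) := by
        funext x
        have hm : ∀ (m : ℕ) (Cm : M), evalM (Polynomial.monomial m Cm) x = (x : ℂ) ^ m • Cm := by
          intro m Cm
          rw [evalM, Polynomial.eval_monomial, _root_.smul_pow, one_pow, mul_smul_comm, mul_one]
        have hstar : star ((x : ℂ) ^ l) = (x : ℂ) ^ l := by
          rw [star_pow]
          congr 1
          exact Complex.conj_ofReal x
        rw [hm, hm, Matrix.conjTranspose_smul, hstar, smul_mul_assoc, smul_mul_assoc,
          mul_smul_comm, smul_smul, ← pow_add, Matrix.smul_apply, smul_eq_mul,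
          Matrix.mul_apply, Finset.mul_sum]
        refine Finset.sum_congr rfl fun b _ => ?_
        rw [Matrix.mul_apply, Finset.sum_mul, Finset.mul_sum]
        refine Finset.sum_congr rfl fun a _ => ?_
        rw [Matrix.conjTranspose_apply]
        ring
      rw [key]
      refine MeasureTheory.integrable_finset_sum _ fun b _ =>
        MeasureTheory.integrable_finset_sum _ fun a _ => ?_
      exact (hmt (k + l) a b).const_mul _

lemma SInt_add_left (p p' q : Polynomial M) :
    SInt Λ W μ (p + p') q t = SInt Λ W μ p q t + SInt Λ W μ p' q t := by
  ext i j
  rw [Matrix.add_apply, SInt_apply, SInt_apply, SInt_apply,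
    ← MeasureTheory.integral_add (integrable_entry Λ W μ hmt p q i j)
      (integrable_entry Λ W μ hmt p' q i j)]
  congr 1; funext x
  rw [evalM_add, add_mul, add_mul, Matrix.add_apply]

lemma SInt_add_right (p q q' : Polynomial M) :
    SInt Λ W μ p (q + q') t = SInt Λ W μ p q t + SInt Λ W μ p q' t := by
  ext i j
  rw [Matrix.add_apply, SInt_apply, SInt_apply, SInt_apply,
    ← MeasureTheory.integral_add (integrable_entry Λ W μ hmt p q i j)
      (integrable_entry Λ W μ hmt p q' i j)]
  congr 1; funext x
  rw [evalM_add, Matrix.conjTranspose_add, mul_add, Matrix.add_apply]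

lemma SInt_C_mul_left (A : M) (p q : Polynomial M) :
    SInt Λ W μ (Polynomial.C A * p) q t = A * SInt Λ W μ p q t := by
  ext i j
  rw [Matrix.mul_apply, SInt_apply]
  have : ∀ b, A i b * SInt Λ W μ p q t b j
      = ∫ x : ℝ, A i b * (evalM p x * defWeight Λ W t x * (evalM q x)ᴴ) b j ∂μ := fun b =>
    (MeasureTheory.integral_const_mul _ _).symm
  simp only [this]
  rw [← MeasureTheory.integral_finset_sum _ fun b _ =>
    (integrable_entry Λ W μ hmt p q b j).const_mul _]
  congr 1; funext x
  rw [evalM_C_mul, mul_assoc A, mul_assoc A, Matrix.mul_apply]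

lemma SInt_C_mul_right (A : M) (p q : Polynomial M) :
    SInt Λ W μ p (Polynomial.C A * q) t = SInt Λ W μ p q t * Aᴴ := by
  ext i j
  rw [Matrix.mul_apply, SInt_apply]
  have : ∀ b, SInt Λ W μ p q t i b * Aᴴ b j
      = ∫ x : ℝ, (evalM p x * defWeight Λ W t x * (evalM q x)ᴴ) i b * Aᴴ b j ∂μ := fun b =>
    (MeasureTheory.integral_mul_const _ _).symm
  simp only [this]
  rw [← MeasureTheory.integral_finset_sum _ fun b _ =>
    (integrable_entry Λ W μ hmt p q i b).mul_const _]
  congr 1; funext x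
  rw [evalM_C_mul, Matrix.conjTranspose_mul, ← mul_assoc, Matrix.mul_apply]

lemma SInt_zero_left (q : Polynomial M) : SInt Λ W μ 0 q t = 0 := by
  have h0 : (0 : Polynomial M) = Polynomial.C (0 : M) * q := by simp
  rw [h0, SInt_C_mul_left Λ W μ hmt, Matrix.zero_mul]

lemma SInt_zero_right (p : Polynomial M) : SInt Λ W μ p 0 t = 0 := by
  have h0 : (0 : Polynomial M) = Polynomial.C (0 : M) * p := by simp
  rw [h0, SInt_C_mul_right Λ W μ hmt, Matrix.conjTranspose_zero, Matrix.mul_zero]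

end

lemma SInt_X_mul (p q : Polynomial M) :
    SInt Λ W μ (Polynomial.X * p) q t = SInt Λ W μ p (Polynomial.X * q) t := by
  ext i j
  rw [SInt_apply, SInt_apply]
  congr 1; funext x
  rw [evalM_X_mul, evalM_X_mul, Matrix.conjTranspose_smul]
  rw [Matrix.smul_mul, Matrix.smul_mul, Matrix.mul_smul]
  congr 1
  simp [Complex.star_def, Complex.conj_ofReal]

lemma SInt_herm (hae : ∀ᵐ x ∂μ, (defWeight Λ W t x)ᴴ = defWeight Λ W t x)
    (p q : Polynomial M) :
    SInt Λ W μ q p t = (SInt Λ W μ p q t)ᴴ := by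
  ext i j
  rw [Matrix.conjTranspose_apply, SInt_apply, SInt_apply, Complex.star_def, ← integral_conj]
  refine MeasureTheory.integral_congr_ae ?_
  filter_upwards [hae] with x hx
  rw [starRingEnd_apply, ← Matrix.conjTranspose_apply, Matrix.conjTranspose_mul,
    Matrix.conjTranspose_mul, Matrix.conjTranspose_conjTranspose, hx, Matrix.mul_assoc]

end SIntSec
section DKeySec

open TodaAux

variable {N : ℕ} (Λ : Matrix (Fin N) (Fin N) ℂ) (W : ℝ → Matrix (Fin N) (Fin N) ℂ)
  (μ : MeasureTheory.Measure ℝ)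

local notation "M" => Matrix (Fin N) (Fin N) ℂ

lemma DKey (I : Set ℝ) (hIopen : IsOpen I)
    (hDUI : ∀ p q : ℝ → Polynomial M,
      (∀ (k : ℕ) (i j : Fin N), DifferentiableOn ℝ (fun t => ((p t).coeff k) i j) I) →
      (∀ (k : ℕ) (i j : Fin N), DifferentiableOn ℝ (fun t => ((q t).coeff k) i j) I) →
      (∃ dp : ℕ, ∀ t ∈ I, (p t).natDegree ≤ dp) →
      (∃ dq : ℕ, ∀ t ∈ I, (q t).natDegree ≤ dq) →
      ∀ t ∈ I, ∀ i j : Fin N,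
        HasDerivAt
          (fun s : ℝ => ∫ x : ℝ,
            (evalM (p s) x * defWeight Λ W s x * (evalM (q s) x)ᴴ) i j ∂μ)
          (∫ x : ℝ,
            deriv (fun s : ℝ =>
              (evalM (p s) x * defWeight Λ W s x * (evalM (q s) x)ᴴ) i j) t ∂μ) t)
    {t : ℝ} (ht : t ∈ I)
    (hmt : ∀ (k : ℕ) (i j : Fin N),
      MeasureTheory.Integrable (fun x : ℝ => (x : ℂ) ^ k * defWeight Λ W t x i j) μ)
    (p q : ℝ → Polynomial M) (dp dq : Polynomial M)
    (hpd : ∀ (k : ℕ) (i j : Fin N), DifferentiableOn ℝ (fun s => ((p s).coeff k) i j) I)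
    (hqd : ∀ (k : ℕ) (i j : Fin N), DifferentiableOn ℝ (fun s => ((q s).coeff k) i j) I)
    (bp bq : ℕ) (hbp : ∀ s ∈ I, (p s).natDegree ≤ bp) (hbq : ∀ s ∈ I, (q s).natDegree ≤ bq)
    (hdp : ∀ (k : ℕ) (i j : Fin N),
      HasDerivAt (fun s => ((p s).coeff k) i j) (dp.coeff k i j) t)
    (hdq : ∀ (k : ℕ) (i j : Fin N),
      HasDerivAt (fun s => ((q s).coeff k) i j) (dq.coeff k i j) t)
    (hdpb : dp.natDegree ≤ bp) (hdqb : dq.natDegree ≤ bq)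
    (hcm : Polynomial.C Λ * p t = p t * Polynomial.C Λ)
    (i j : Fin N) :
    HasDerivAt (fun s => SInt Λ W μ (p s) (q s) s i j)
      ((SInt Λ W μ dp (q t) t - Λ * SInt Λ W μ (Polynomial.X * p t) (q t) t
        + SInt Λ W μ (p t) dq t) i j) t := by
  have hI : I ∈ nhds t := hIopen.mem_nhds ht
  -- entrywise derivative of the left polynomial factor
  have hP : ∀ (x : ℝ) (a c : Fin N),
      HasDerivAt (fun s => evalM (p s) x a c) (evalM dp x a c) t := by
    intro x a c
    have hg : HasDerivAt (fun s => ∑ k ∈ Finset.range (bp + 1), (x : ℂ) ^ k * (p s).coeff k a c)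
        (∑ k ∈ Finset.range (bp + 1), (x : ℂ) ^ k * dp.coeff k a c) t :=
      HasDerivAt.fun_sum fun k _ => (hdp k a c).const_mul _
    have he : (fun s => evalM (p s) x a c) =ᶠ[nhds t]
        fun s => ∑ k ∈ Finset.range (bp + 1), (x : ℂ) ^ k * (p s).coeff k a c :=
      Filter.eventuallyEq_of_mem hI fun s hs => evalM_apply (hbp s hs) x a c
    have := hg.congr_of_eventuallyEq he
    rwa [← evalM_apply hdpb x a c] at this
  have hQ : ∀ (x : ℝ) (a c : Fin N),
      HasDerivAt (fun s => evalM (q s) x a c) (evalM dq x a c) t := by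
    intro x a c
    have hg : HasDerivAt (fun s => ∑ k ∈ Finset.range (bq + 1), (x : ℂ) ^ k * (q s).coeff k a c)
        (∑ k ∈ Finset.range (bq + 1), (x : ℂ) ^ k * dq.coeff k a c) t :=
      HasDerivAt.fun_sum fun k _ => (hdq k a c).const_mul _
    have he : (fun s => evalM (q s) x a c) =ᶠ[nhds t]
        fun s => ∑ k ∈ Finset.range (bq + 1), (x : ℂ) ^ k * (q s).coeff k a c :=
      Filter.eventuallyEq_of_mem hI fun s hs => evalM_apply (hbq s hs) x a c
    have := hg.congr_of_eventuallyEq he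
    rwa [← evalM_apply hdqb x a c] at this
  -- pointwise derivative of the integrand
  have hF : ∀ x : ℝ,
      HasDerivAt (fun s => (evalM (p s) x * defWeight Λ W s x * (evalM (q s) x)ᴴ) i j)
        ((evalM dp x * defWeight Λ W t x * (evalM (q t) x)ᴴ
          + evalM (p t) x * ((-(x : ℂ)) • (Λ * defWeight Λ W t x)) * (evalM (q t) x)ᴴ
          + evalM (p t) x * defWeight Λ W t x * (evalM dq x)ᴴ) i j) t := by
    intro x
    have hsum : HasDerivAt (fun s => ∑ b : Fin N,
        (∑ a : Fin N, evalM (p s) x i a * defWeight Λ W s x a b) * star (evalM (q s) x j b))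
        (∑ b : Fin N,
          ((∑ a : Fin N, (evalM dp x i a * defWeight Λ W t x a b
              + evalM (p t) x i a * ((-(x : ℂ)) • (Λ * defWeight Λ W t x)) a b))
            * star (evalM (q t) x j b)
          + (∑ a : Fin N, evalM (p t) x i a * defWeight Λ W t x a b)
            * star (evalM dq x j b))) t := by
      refine HasDerivAt.fun_sum fun b _ => ?_
      refine HasDerivAt.mul ?_ (hQ x j b).star
      exact HasDerivAt.fun_sum fun a _ =>
        (hP x i a).mul (hasDerivAt_defWeight_entry Λ W x t a b)
    have heq : (fun s => (evalM (p s) x * defWeight Λ W s x * (evalM (q s) x)ᴴ) i j)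
        = fun s => ∑ b : Fin N,
          (∑ a : Fin N, evalM (p s) x i a * defWeight Λ W s x a b)
            * star (evalM (q s) x j b) := by
      funext s
      simp only [Matrix.mul_apply, Matrix.conjTranspose_apply]
    have hval : (∑ b : Fin N,
        ((∑ a : Fin N, (evalM dp x i a * defWeight Λ W t x a b
            + evalM (p t) x i a * ((-(x : ℂ)) • (Λ * defWeight Λ W t x)) a b))
          * star (evalM (q t) x j b)
        + (∑ a : Fin N, evalM (p t) x i a * defWeight Λ W t x a b)
          * star (evalM dq x j b)))
        = (evalM dp x * defWeight Λ W t x * (evalM (q t) x)ᴴ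
          + evalM (p t) x * ((-(x : ℂ)) • (Λ * defWeight Λ W t x)) * (evalM (q t) x)ᴴ
          + evalM (p t) x * defWeight Λ W t x * (evalM dq x)ᴴ) i j := by
      simp only [Matrix.add_apply, Matrix.mul_apply, Matrix.conjTranspose_apply,
        Finset.sum_add_distrib, add_mul, Finset.sum_mul]
    rw [heq, ← hval]
    exact hsum
  -- identify the integral of the derivative
  have hmid : ∀ x : ℝ,
      (evalM (p t) x * ((-(x : ℂ)) • (Λ * defWeight Λ W t x)) * (evalM (q t) x)ᴴ) i j
        = -((evalM (Polynomial.C Λ * (Polynomial.X * p t)) x * defWeight Λ W t x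
            * (evalM (q t) x)ᴴ : Matrix (Fin N) (Fin N) ℂ) i j) := by
    intro x
    have hcm' : evalM (p t) x * Λ = Λ * evalM (p t) x := by
      have h1 := congrArg (fun r => evalM r x) hcm
      simp only [evalM_mul, evalM_C] at h1
      exact h1.symm
    have h2 : evalM (p t) x * ((-(x : ℂ)) • (Λ * defWeight Λ W t x)) * (evalM (q t) x)ᴴ
        = -((x : ℂ) • (evalM (p t) x * Λ * defWeight Λ W t x * (evalM (q t) x)ᴴ)) := by
      simp only [neg_smul, mul_neg, neg_mul, mul_smul_comm, smul_mul_assoc, mul_assoc]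
    have h3 : evalM (Polynomial.C Λ * (Polynomial.X * p t)) x * defWeight Λ W t x
          * (evalM (q t) x)ᴴ
        = (x : ℂ) • (evalM (p t) x * Λ * defWeight Λ W t x * (evalM (q t) x)ᴴ) := by
      simp only [evalM_C_mul, evalM_X_mul, mul_smul_comm, smul_mul_assoc, mul_assoc]
      rw [← mul_assoc, ← hcm', mul_assoc]
    rw [h2, h3, Matrix.neg_apply]
  have hint : (∫ x : ℝ, deriv (fun s : ℝ =>
        (evalM (p s) x * defWeight Λ W s x * (evalM (q s) x)ᴴ) i j) t ∂μ)
      = (SInt Λ W μ dp (q t) t - Λ * SInt Λ W μ (Polynomial.X * p t) (q t) t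
        + SInt Λ W μ (p t) dq t) i j := by
    have h1 : ∀ x : ℝ, deriv (fun s : ℝ =>
        (evalM (p s) x * defWeight Λ W s x * (evalM (q s) x)ᴴ) i j) t
        = (evalM dp x * defWeight Λ W t x * (evalM (q t) x)ᴴ) i j
          - (evalM (Polynomial.C Λ * (Polynomial.X * p t)) x * defWeight Λ W t x
              * (evalM (q t) x)ᴴ : Matrix (Fin N) (Fin N) ℂ) i j
          + (evalM (p t) x * defWeight Λ W t x * (evalM dq x)ᴴ) i j := by
      intro x
      rw [(hF x).deriv, Matrix.add_apply, Matrix.add_apply, hmid x]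
      ring
    simp only [h1]
    have hsub : MeasureTheory.Integrable (fun x : ℝ =>
        (evalM dp x * defWeight Λ W t x * (evalM (q t) x)ᴴ) i j
          - (evalM (Polynomial.C Λ * (Polynomial.X * p t)) x * defWeight Λ W t x
              * (evalM (q t) x)ᴴ : Matrix (Fin N) (Fin N) ℂ) i j) μ :=
      (integrable_entry Λ W μ hmt dp (q t) i j).sub
        (integrable_entry Λ W μ hmt (Polynomial.C Λ * (Polynomial.X * p t)) (q t) i j)
    rw [MeasureTheory.integral_add hsub (integrable_entry Λ W μ hmt (p t) dq i j),
      MeasureTheory.integral_sub (integrable_entry Λ W μ hmt dp (q t) i j)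
        (integrable_entry Λ W μ hmt (Polynomial.C Λ * (Polynomial.X * p t)) (q t) i j)]
    rw [← SInt_apply Λ W μ dp (q t) i j,
      ← SInt_apply Λ W μ (Polynomial.C Λ * (Polynomial.X * p t)) (q t) i j,
      ← SInt_apply Λ W μ (p t) dq i j, SInt_C_mul_left Λ W μ hmt]
    simp [Matrix.sub_apply, Matrix.add_apply]
  have hDUI' := hDUI p q hpd hqd ⟨bp, hbp⟩ ⟨bq, hbq⟩ t ht i j
  rw [hint] at hDUI'
  exact hDUI'

end DKeySec
namespace TodaAux

variable {N : ℕ}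

local notation "M" => Matrix (Fin N) (Fin N) ℂ

lemma hasDerivAt_mul_entry {F G : ℝ → M} {F' G' : M} {t : ℝ}
    (hF : ∀ i j, HasDerivAt (fun s => F s i j) (F' i j) t)
    (hG : ∀ i j, HasDerivAt (fun s => G s i j) (G' i j) t) (i j : Fin N) :
    HasDerivAt (fun s => (F s * G s) i j) ((F' * G t + F t * G') i j) t := by
  have h : HasDerivAt (fun s => ∑ a, F s i a * G s a j)
      (∑ a, (F' i a * G t a j + F t i a * G' a j)) t :=
    HasDerivAt.fun_sum fun a _ => (hF i a).mul (hG a j)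
  have e1 : (fun s => (F s * G s) i j) = fun s => ∑ a, F s i a * G s a j := by
    funext s; rw [Matrix.mul_apply]
  have e2 : (∑ a, (F' i a * G t a j + F t i a * G' a j)) = (F' * G t + F t * G') i j := by
    rw [Matrix.add_apply, Matrix.mul_apply, Matrix.mul_apply, Finset.sum_add_distrib]
  rw [e1, ← e2]; exact h

lemma hasDerivAt_inv_entry {F : ℝ → M} {F' : M} {t : ℝ} {U : Set ℝ} (hU : U ∈ nhds t)
    (hF : ∀ i j, HasDerivAt (fun s => F s i j) (F' i j) t)
    (hinv : ∀ s ∈ U, IsUnit (F s).det) (i j : Fin N) :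
    HasDerivAt (fun s => (F s)⁻¹ i j) ((-((F t)⁻¹ * F' * (F t)⁻¹)) i j) t := by
  classical
  have hFd : ∀ a b : Fin N, DifferentiableAt ℝ (fun s => F s a b) t :=
    fun a b => (hF a b).differentiableAt
  have hdet : ∀ G : ℝ → M, (∀ a b : Fin N, DifferentiableAt ℝ (fun s => G s a b) t) →
      DifferentiableAt ℝ (fun s => (G s).det) t := by
    intro G hG
    have e : (fun s => (G s).det)
        = fun s => ∑ σ : Equiv.Perm (Fin N),
            Equiv.Perm.sign σ • ∏ a, G s (σ a) a := by
      funext s; rw [Matrix.det_apply]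
    rw [e]
    refine DifferentiableAt.fun_sum fun σ _ => ?_
    have : DifferentiableAt ℝ (fun s => ∏ a, G s (σ a) a) t :=
      DifferentiableAt.fun_finsetProd fun a _ => hG (σ a) a
    simpa [Units.smul_def] using this.const_mul (((Equiv.Perm.sign σ : ℤ) : ℂ))
  have hdetF : DifferentiableAt ℝ (fun s => (F s).det) t := hdet F hFd
  have hne : (F t).det ≠ 0 := (hinv t (mem_of_mem_nhds hU)).ne_zero
  have hadj : ∀ a b : Fin N, DifferentiableAt ℝ (fun s => (F s).adjugate a b) t := by
    intro a b
    have e : (fun s => (F s).adjugate a b)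
        = fun s => ((F s).updateRow b (Pi.single a 1)).det := by
      funext s; rw [Matrix.adjugate_apply]
    rw [e]
    refine hdet _ ?_
    intro c d
    by_cases h : c = b
    · have e2 : (fun s => (F s).updateRow b (Pi.single a 1) c d)
          = fun _ : ℝ => (Pi.single a (1 : ℂ) : Fin N → ℂ) d := by
        funext s; rw [Matrix.updateRow_apply, if_pos h]
      rw [e2]; exact differentiableAt_const _
    · have e2 : (fun s => (F s).updateRow b (Pi.single a 1) c d)
          = fun s => F s c d := by
        funext s; rw [Matrix.updateRow_apply, if_neg h]
      rw [e2]; exact hFd c d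
  have hinvd : ∀ a b : Fin N, DifferentiableAt ℝ (fun s => (F s)⁻¹ a b) t := by
    intro a b
    have e : (fun s => (F s)⁻¹ a b)
        = fun s => ((F s).det)⁻¹ * (F s).adjugate a b := by
      funext s
      rw [Matrix.inv_def, Matrix.smul_apply, Ring.inverse_eq_inv, smul_eq_mul]
    rw [e]
    exact (hdetF.inv hne).mul (hadj a b)
  set G' : M := Matrix.of fun a b => deriv (fun s => (F s)⁻¹ a b) t with hG'
  have hG : ∀ a b : Fin N, HasDerivAt (fun s => (F s)⁻¹ a b) (G' a b) t :=
    fun a b => (hinvd a b).hasDerivAt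
  have hprod : ∀ a b : Fin N, HasDerivAt (fun s => (F s * (F s)⁻¹) a b)
      ((F' * (F t)⁻¹ + F t * G') a b) t :=
    fun a b => hasDerivAt_mul_entry hF hG a b
  have hone : ∀ a b : Fin N, HasDerivAt (fun s => (F s * (F s)⁻¹) a b) 0 t := by
    intro a b
    refine (hasDerivAt_const t ((1 : M) a b)).congr_of_eventuallyEq ?_
    filter_upwards [hU] with s hs
    rw [Matrix.mul_nonsing_inv _ (hinv s hs)]
  have hzero : F' * (F t)⁻¹ + F t * G' = 0 := by
    ext a b
    rw [Matrix.zero_apply]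
    exact (hprod a b).unique (hone a b)
  have hsolve : G' = -((F t)⁻¹ * F' * (F t)⁻¹) := by
    have h1 : F t * G' = -(F' * (F t)⁻¹) := by
      rw [eq_neg_iff_add_eq_zero, add_comm]
      exact hzero
    have h2 : (F t)⁻¹ * (F t * G') = G' := by
      rw [← mul_assoc, Matrix.nonsing_inv_mul _ (hinv t (mem_of_mem_nhds hU)), one_mul]
    rw [← h2, h1, mul_neg, mul_assoc]
  rw [← hsolve]
  exact hG i j

end TodaAux
open TodaAux in
/-- Proposition 2.2: the recurrence coefficients `B_n(t)`, `C_n(t)` of the monic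
matrix-valued orthogonal polynomials for the deformed weight `e^{-xtΛ} W(x) dμ(x)`
satisfy the non-abelian Toda lattice equations
`Ċ_n = Λ(C_n B_{n-1} - B_n C_n)` (n ≥ 1) and `Ḃ_n = Λ(C_n - C_{n+1})` (n ≥ 0),
with `C_0(t) := 0`. -/
theorem stmt_0 (N : ℕ) (hN : 0 < N)
    (μ : Measure ℝ)
    (hsupp : ∀ s : Finset ℝ, μ ((↑s : Set ℝ)ᶜ) ≠ 0)
    (W : ℝ → Matrix (Fin N) (Fin N) ℂ)
    (hWmeas : ∀ i j : Fin N, Measurable fun x => W x i j)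
    (hWpos : ∀ᵐ x ∂μ, (W x).PosDef)
    (Λ : Matrix (Fin N) (Fin N) ℂ)
    (hΛ : ∀ᵐ x ∂μ, Λ * W x = W x * Λᴴ)
    (I : Set ℝ) (hIopen : IsOpen I) (hIconn : I.OrdConnected) (h0I : (0 : ℝ) ∈ I)
    (hmom : ∀ t ∈ I, ∀ (k : ℕ) (i j : Fin N),
      Integrable (fun x : ℝ => (x : ℂ) ^ k * defWeight Λ W t x i j) μ)
    (P : ℕ → ℝ → Polynomial (Matrix (Fin N) (Fin N) ℂ))
    (hmonic : ∀ n : ℕ, ∀ t ∈ I, (P n t).Monic ∧ (P n t).natDegree = n)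
    (H : ℕ → ℝ → Matrix (Fin N) (Fin N) ℂ)
    (hHpos : ∀ n : ℕ, ∀ t ∈ I, (H n t).PosDef)
    (horth : ∀ t ∈ I, ∀ n m : ℕ,
      (Matrix.of fun i j => ∫ x : ℝ,
          (evalM (P n t) x * defWeight Λ W t x * (evalM (P m t) x)ᴴ) i j ∂μ) =
        if n = m then H n t else 0)
    (B C : ℕ → ℝ → Matrix (Fin N) (Fin N) ℂ)
    (hC0 : ∀ t ∈ I, C 0 t = 0)
    (hrec0 : ∀ t ∈ I, Polynomial.X * P 0 t = P 1 t + Polynomial.C (B 0 t) * P 0 t)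
    (hrec : ∀ t ∈ I, ∀ n : ℕ,
      Polynomial.X * P (n + 1) t =
        P (n + 2) t + Polynomial.C (B (n + 1) t) * P (n + 1) t +
          Polynomial.C (C (n + 1) t) * P n t)
    (hcomm : ∀ t ∈ I, ∀ n : ℕ,
      Λ * B n t = B n t * Λ ∧ Λ * C n t = C n t * Λ ∧ Λ * H n t = H n t * Λᴴ ∧
        Polynomial.C Λ * P n t = P n t * Polynomial.C Λ)
    (hdiff : ∀ (n k : ℕ) (i j : Fin N),
      DifferentiableOn ℝ (fun t => ((P n t).coeff k) i j) I)
    (hDUI : ∀ p q : ℝ → Polynomial (Matrix (Fin N) (Fin N) ℂ),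
      (∀ (k : ℕ) (i j : Fin N), DifferentiableOn ℝ (fun t => ((p t).coeff k) i j) I) →
      (∀ (k : ℕ) (i j : Fin N), DifferentiableOn ℝ (fun t => ((q t).coeff k) i j) I) →
      (∃ dp : ℕ, ∀ t ∈ I, (p t).natDegree ≤ dp) →
      (∃ dq : ℕ, ∀ t ∈ I, (q t).natDegree ≤ dq) →
      ∀ t ∈ I, ∀ i j : Fin N,
        HasDerivAt
          (fun s : ℝ => ∫ x : ℝ,
            (evalM (p s) x * defWeight Λ W s x * (evalM (q s) x)ᴴ) i j ∂μ)
          (∫ x : ℝ,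
            deriv (fun s : ℝ =>
              (evalM (p s) x * defWeight Λ W s x * (evalM (q s) x)ᴴ) i j) t ∂μ) t) :
    ∀ t ∈ I,
      (∀ (n : ℕ) (i j : Fin N),
        HasDerivAt (fun s : ℝ => C (n + 1) s i j)
          ((Λ * (C (n + 1) t * B n t - B (n + 1) t * C (n + 1) t)) i j) t) ∧
      (∀ (n : ℕ) (i j : Fin N),
        HasDerivAt (fun s : ℝ => B n s i j)
          ((Λ * (C n t - C (n + 1) t)) i j) t) := by
  -- basic facts valid at every point of I
  have hmt : ∀ u ∈ I, ∀ (k : ℕ) (i j : Fin N),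
      Integrable (fun x : ℝ => (x : ℂ) ^ k * defWeight Λ W u x i j) μ := hmom
  have horth' : ∀ u ∈ I, ∀ n m : ℕ,
      SInt Λ W μ (P n u) (P m u) u = if n = m then H n u else 0 := fun u hu => horth u hu
  have hae : ∀ u : ℝ, ∀ᵐ x ∂μ, (defWeight Λ W u x)ᴴ = defWeight Λ W u x := by
    intro u
    filter_upwards [hWpos, hΛ] with x h1 h2
    exact defWeight_herm h1.1 h2
  have hP0 : ∀ u ∈ I, P 0 u = Polynomial.C 1 := by
    intro u hu
    obtain ⟨hm, hd⟩ := hmonic 0 u hu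
    have h1 := Polynomial.eq_C_of_natDegree_le_zero (le_of_eq hd)
    rw [h1]
    congr 1
    have := hm.coeff_natDegree
    rwa [hd] at this
  -- orthogonality against lower degrees
  have OrthL : ∀ u ∈ I, ∀ (n d : ℕ), ∀ r : Polynomial (Matrix (Fin N) (Fin N) ℂ),
      d < n → r.natDegree ≤ d → SInt Λ W μ r (P n u) u = 0 := by
    intro u hu n d
    induction d with
    | zero =>
      intro r hn hr
      have h1 : r = Polynomial.C (r.coeff 0) * P 0 u := by
        rw [hP0 u hu, ← Polynomial.C_mul, mul_one]
        exact Polynomial.eq_C_of_natDegree_le_zero hr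
      rw [h1, SInt_C_mul_left Λ W μ (hmt u hu), horth' u hu 0 n,
        if_neg (by omega), Matrix.mul_zero]
    | succ d ih =>
      intro r hn hr
      have hPd := hmonic (d + 1) u hu
      have hdeg : (r - Polynomial.C (r.coeff (d + 1)) * P (d + 1) u).natDegree ≤ d := by
        rw [Polynomial.natDegree_le_iff_coeff_eq_zero]
        intro m hm
        rw [Polynomial.coeff_sub, Polynomial.coeff_C_mul]
        rcases eq_or_lt_of_le (Nat.succ_le_of_lt hm) with h | h
        · have e1 : (P (d + 1) u).coeff (d + 1) = 1 := by
            have := hPd.1.coeff_natDegree; rwa [hPd.2] at this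
          rw [← h, e1, mul_one, sub_self]
        · have e1 : r.coeff m = 0 :=
            Polynomial.coeff_eq_zero_of_natDegree_lt (lt_of_le_of_lt hr h)
          have e2 : (P (d + 1) u).coeff m = 0 :=
            Polynomial.coeff_eq_zero_of_natDegree_lt (by rw [hPd.2]; exact h)
          rw [e1, e2, mul_zero, sub_zero]
      have h2 : r = (r - Polynomial.C (r.coeff (d + 1)) * P (d + 1) u)
          + Polynomial.C (r.coeff (d + 1)) * P (d + 1) u := by abel
      rw [h2, SInt_add_left Λ W μ (hmt u hu), ih _ (by omega) hdeg,
        SInt_C_mul_left Λ W μ (hmt u hu), horth' u hu (d + 1) n, if_neg (by omega),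
        Matrix.mul_zero, add_zero]
  have OrthL' : ∀ u ∈ I, ∀ n : ℕ, ∀ r : Polynomial (Matrix (Fin N) (Fin N) ℂ),
      r.natDegree < n → SInt Λ W μ r (P n u) u = 0 := fun u hu n r hr =>
    OrthL u hu n r.natDegree r hr le_rfl
  have OrthR : ∀ u ∈ I, ∀ n : ℕ, ∀ r : Polynomial (Matrix (Fin N) (Fin N) ℂ),
      r.natDegree < n → SInt Λ W μ (P n u) r u = 0 := by
    intro u hu n r hr
    rw [SInt_herm Λ W μ (hae u) r (P n u), OrthL' u hu n r hr, Matrix.conjTranspose_zero]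
  -- recurrence-based evaluations of the pairing
  have hXPP : ∀ u ∈ I, ∀ n : ℕ,
      SInt Λ W μ (Polynomial.X * P n u) (P n u) u = B n u * H n u := by
    intro u hu n
    cases n with
    | zero =>
      rw [hrec0 u hu, SInt_add_left Λ W μ (hmt u hu), SInt_C_mul_left Λ W μ (hmt u hu),
        horth' u hu 1 0, horth' u hu 0 0, if_neg one_ne_zero, if_pos rfl, zero_add]
    | succ n =>
      rw [hrec u hu n, SInt_add_left Λ W μ (hmt u hu), SInt_add_left Λ W μ (hmt u hu),
        SInt_C_mul_left Λ W μ (hmt u hu), SInt_C_mul_left Λ W μ (hmt u hu),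
        horth' u hu (n+2) (n+1), horth' u hu (n+1) (n+1), horth' u hu n (n+1),
        if_neg (by omega), if_pos rfl, if_neg (by omega), Matrix.mul_zero, zero_add, add_zero]
  have hXPQ : ∀ u ∈ I, ∀ n : ℕ,
      SInt Λ W μ (Polynomial.X * P (n+1) u) (P n u) u = C (n+1) u * H n u := by
    intro u hu n
    rw [hrec u hu n, SInt_add_left Λ W μ (hmt u hu), SInt_add_left Λ W μ (hmt u hu),
      SInt_C_mul_left Λ W μ (hmt u hu), SInt_C_mul_left Λ W μ (hmt u hu),
      horth' u hu (n+2) n, horth' u hu (n+1) n, horth' u hu n n,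
      if_neg (by omega), if_neg (by omega), if_pos rfl, Matrix.mul_zero, zero_add, zero_add]
  have hRXP : ∀ u ∈ I, ∀ n : ℕ, ∀ r : Polynomial (Matrix (Fin N) (Fin N) ℂ),
      SInt Λ W μ r (Polynomial.X * P n u) u
        = SInt Λ W μ r (P (n+1) u) u + SInt Λ W μ r (P n u) u * (B n u)ᴴ
          + (if n = 0 then 0
            else SInt Λ W μ r (P (n-1) u) u * (C n u)ᴴ) := by
    intro u hu n r
    cases n with
    | zero =>
      rw [hrec0 u hu, SInt_add_right Λ W μ (hmt u hu), SInt_C_mul_right Λ W μ (hmt u hu),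
        if_pos rfl, add_zero]
    | succ n =>
      rw [hrec u hu n, SInt_add_right Λ W μ (hmt u hu), SInt_add_right Λ W μ (hmt u hu),
        SInt_C_mul_right Λ W μ (hmt u hu), SInt_C_mul_right Λ W μ (hmt u hu),
        if_neg (Nat.succ_ne_zero n)]
      simp only [Nat.add_sub_cancel]
  have hXPQ' : ∀ u ∈ I, ∀ n : ℕ,
      SInt Λ W μ (Polynomial.X * P (n+1) u) (P n u) u = H (n+1) u := by
    intro u hu n
    rw [SInt_X_mul, hRXP u hu n (P (n+1) u), horth' u hu (n+1) (n+1), if_pos rfl,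
      horth' u hu (n+1) n, if_neg (by omega), Matrix.zero_mul, add_zero]
    cases n with
    | zero => rw [if_pos rfl, add_zero]
    | succ m =>
      simp only [Nat.add_sub_cancel]
      rw [if_neg (Nat.succ_ne_zero m), horth' u hu (m+2) m, if_neg (by omega),
        Matrix.zero_mul, add_zero]
  have hCH : ∀ u ∈ I, ∀ n : ℕ, C (n+1) u * H n u = H (n+1) u := by
    intro u hu n
    rw [← hXPQ u hu n, hXPQ' u hu n]
  have hHherm : ∀ u ∈ I, ∀ n : ℕ, (H n u)ᴴ = H n u := fun u hu n => (hHpos n u hu).1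
  have hsym : ∀ u ∈ I, ∀ n : ℕ, B n u * H n u = H n u * (B n u)ᴴ := by
    intro u hu n
    have h1 : SInt Λ W μ (P n u) (Polynomial.X * P n u) u
        = (SInt Λ W μ (Polynomial.X * P n u) (P n u) u)ᴴ :=
      SInt_herm Λ W μ (hae u) _ _
    rw [← SInt_X_mul] at h1
    rw [hXPP u hu n] at h1
    rw [h1, Matrix.conjTranspose_mul, hHherm u hu n]
  have hHC : ∀ u ∈ I, ∀ n : ℕ,
      H n u * (C (n+1) u)ᴴ = C (n+1) u * H n u := by
    intro u hu n
    have h1 : H n u * (C (n+1) u)ᴴ = (C (n+1) u * H n u)ᴴ := by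
      rw [Matrix.conjTranspose_mul, hHherm u hu n]
    rw [h1, hCH u hu n, hHherm u hu (n+1)]
  -- fix t and build the coefficient-derivative polynomials
  intro t ht
  have hIt : I ∈ nhds t := hIopen.mem_nhds ht
  set dP : ℕ → Polynomial (Matrix (Fin N) (Fin N) ℂ) := fun n =>
    ∑ k ∈ Finset.range n, Polynomial.monomial k
      (Matrix.of fun i j => deriv (fun s => (P n s).coeff k i j) t) with hdP
  have hdPcoeff : ∀ n k : ℕ, (dP n).coeff k = if k < n then
      (Matrix.of fun i j => deriv (fun s => (P n s).coeff k i j) t) else 0 := by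
    intro n k
    rw [hdP, Polynomial.finset_sum_coeff]
    simp only [Polynomial.coeff_monomial]
    rw [Finset.sum_ite_eq' (Finset.range n) k]
    simp [Finset.mem_range]
  have hdPd : ∀ (n k : ℕ) (i j : Fin N),
      HasDerivAt (fun s => (P n s).coeff k i j) ((dP n).coeff k i j) t := by
    intro n k i j
    rw [hdPcoeff n k]
    by_cases h : k < n
    · rw [if_pos h]
      exact ((hdiff n k i j t ht).differentiableAt hIt).hasDerivAt
    · rw [if_neg h, Matrix.zero_apply]
      rcases eq_or_lt_of_le (le_of_not_gt h) with h1 | h1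
      · have he : (fun s => (P n s).coeff k i j)
            =ᶠ[nhds t] fun _ => (1 : Matrix (Fin N) (Fin N) ℂ) i j := by
          filter_upwards [hIt] with s hs
          have h2 := (hmonic n s hs).1.coeff_natDegree
          rw [(hmonic n s hs).2] at h2
          rw [← h1, h2]
        exact (hasDerivAt_const t _).congr_of_eventuallyEq he
      · have he : (fun s => (P n s).coeff k i j) =ᶠ[nhds t] fun _ => (0 : ℂ) := by
          filter_upwards [hIt] with s hs
          rw [Polynomial.coeff_eq_zero_of_natDegree_lt (by rw [(hmonic n s hs).2]; exact h1),
            Matrix.zero_apply]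
        exact (hasDerivAt_const t _).congr_of_eventuallyEq he
  have hdPcz : ∀ n m : ℕ, n ≤ m → (dP n).coeff m = 0 := by
    intro n m h
    rw [hdPcoeff, if_neg (by omega)]
  have hdPdeg1 : ∀ n : ℕ, (dP n).natDegree ≤ n - 1 :=
    fun n => Polynomial.natDegree_le_iff_coeff_eq_zero.mpr fun m hm => hdPcz n m (by omega)
  have hdPdeg : ∀ n : ℕ, (dP n).natDegree ≤ n := fun n => le_trans (hdPdeg1 n) (by omega)
  have hdP0 : dP 0 = 0 := by rw [hdP]; simp
  have hOdPL : ∀ n m : ℕ, n ≤ m → SInt Λ W μ (dP n) (P m t) t = 0 := by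
    intro n m h
    rcases Nat.eq_zero_or_pos n with h1 | h1
    · rw [h1, hdP0]; exact SInt_zero_left Λ W μ (hmt t ht) _
    · exact OrthL t ht m (n - 1) (dP n) (by omega) (hdPdeg1 n)
  have hOdPR : ∀ n m : ℕ, n ≤ m → SInt Λ W μ (P m t) (dP n) t = 0 := by
    intro n m h
    rw [SInt_herm Λ W μ (hae t), hOdPL n m h, Matrix.conjTranspose_zero]
  -- derivative of the pairings of the P's
  have hdSPP : ∀ n m : ℕ, ∀ i j : Fin N,
      HasDerivAt (fun s => SInt Λ W μ (P n s) (P m s) s i j)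
        ((SInt Λ W μ (dP n) (P m t) t
          - Λ * SInt Λ W μ (Polynomial.X * P n t) (P m t) t
          + SInt Λ W μ (P n t) (dP m) t) i j) t := by
    intro n m i j
    exact DKey Λ W μ I hIopen hDUI ht (hmt t ht) (fun s => P n s) (fun s => P m s)
      (dP n) (dP m) (hdiff n) (hdiff m) n m
      (fun s hs => le_of_eq (hmonic n s hs).2) (fun s hs => le_of_eq (hmonic m s hs).2)
      (hdPd n) (hdPd m) (hdPdeg n) (hdPdeg m) (hcomm t ht n).2.2.2 i j
  -- derivative of H
  have hdH : ∀ n : ℕ, ∀ i j : Fin N,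
      HasDerivAt (fun s => H n s i j) ((-(Λ * (B n t * H n t))) i j) t := by
    intro n i j
    have h0 := hdSPP n n i j
    rw [hOdPL n n le_rfl, hOdPR n n le_rfl, hXPP t ht n, zero_sub, add_zero] at h0
    refine h0.congr_of_eventuallyEq ?_
    filter_upwards [hIt] with s hs
    rw [horth' s hs n n, if_pos rfl]
  have hK : ∀ n : ℕ, SInt Λ W μ (dP (n+1)) (P n t) t = Λ * (C (n+1) t * H n t) := by
    intro n
    ext i j
    have h0 := hdSPP (n+1) n i j
    rw [hOdPR n (n+1) (Nat.le_succ n), hXPQ t ht n, add_zero] at h0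
    have hz : HasDerivAt (fun s => SInt Λ W μ (P (n+1) s) (P n s) s i j) 0 t := by
      refine (hasDerivAt_const t (0 : ℂ)).congr_of_eventuallyEq ?_
      filter_upwards [hIt] with s hs
      rw [horth' s hs (n+1) n, if_neg (by omega), Matrix.zero_apply]
    have h1 := h0.unique hz
    rw [Matrix.sub_apply] at h1
    have h2 : (SInt Λ W μ (dP (n+1)) (P n t) t) i j
        = (Λ * (C (n+1) t * H n t)) i j := by
      have h3 : (Λ * (C (n+1) t * H n t)) i j = (Λ * (C (n+1) t * H n t) : Matrix (Fin N) (Fin N) ℂ) i j := rfl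
      linear_combination h1
    exact h2
  -- ingredients for the derivative of B·H
  have hXdeg : ∀ r : Polynomial (Matrix (Fin N) (Fin N) ℂ),
      (Polynomial.X * r).natDegree ≤ 1 + r.natDegree := by
    intro r
    exact le_trans Polynomial.natDegree_mul_le
      (Nat.add_le_add_right Polynomial.natDegree_X_le _)
  have hXcd : ∀ (n k : ℕ) (i j : Fin N),
      DifferentiableOn ℝ (fun s => ((Polynomial.X * P n s).coeff k) i j) I := by
    intro n k i j
    cases k with
    | zero =>
      have e : (fun s => ((Polynomial.X * P n s).coeff 0) i j) = fun _ => (0 : ℂ) := by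
        funext s
        rw [Polynomial.mul_coeff_zero, Polynomial.coeff_X_zero, zero_mul, Matrix.zero_apply]
      rw [e]; exact differentiableOn_const 0
    | succ k =>
      have e : (fun s => ((Polynomial.X * P n s).coeff (k+1)) i j)
          = fun s => ((P n s).coeff k) i j := by
        funext s; rw [Polynomial.coeff_X_mul]
      rw [e]; exact hdiff n k i j
  have hXdp : ∀ (n k : ℕ) (i j : Fin N),
      HasDerivAt (fun s => ((Polynomial.X * P n s).coeff k) i j)
        ((Polynomial.X * dP n).coeff k i j) t := by
    intro n k i j
    cases k with
    | zero =>
      have e0 : ((Polynomial.X * dP n).coeff 0) i j = 0 := by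
        rw [Polynomial.mul_coeff_zero, Polynomial.coeff_X_zero, zero_mul, Matrix.zero_apply]
      rw [e0]
      refine (hasDerivAt_const t (0 : ℂ)).congr_of_eventuallyEq ?_
      filter_upwards with s
      rw [Polynomial.mul_coeff_zero, Polynomial.coeff_X_zero, zero_mul, Matrix.zero_apply]
    | succ k =>
      rw [Polynomial.coeff_X_mul]
      refine (hdPd n k i j).congr_of_eventuallyEq ?_
      filter_upwards with s
      rw [Polynomial.coeff_X_mul]
  have hcmX : ∀ n : ℕ, Polynomial.C Λ * (Polynomial.X * P n t)
      = (Polynomial.X * P n t) * Polynomial.C Λ := by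
    intro n
    rw [← mul_assoc, ← Polynomial.X_mul_C, mul_assoc, (hcomm t ht n).2.2.2, ← mul_assoc]
  have hdBH : ∀ n : ℕ, ∀ i j : Fin N,
      HasDerivAt (fun s => (B n s * H n s) i j)
        ((SInt Λ W μ (Polynomial.X * dP n) (P n t) t
          - Λ * SInt Λ W μ (Polynomial.X * (Polynomial.X * P n t)) (P n t) t
          + SInt Λ W μ (Polynomial.X * P n t) (dP n) t) i j) t := by
    intro n i j
    have h0 := DKey Λ W μ I hIopen hDUI ht (hmt t ht) (fun s => Polynomial.X * P n s)
      (fun s => P n s) (Polynomial.X * dP n) (dP n) (hXcd n) (hdiff n) (n+1) n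
      (fun s hs => le_trans (hXdeg (P n s)) (by rw [(hmonic n s hs).2]; omega))
      (fun s hs => le_of_eq (hmonic n s hs).2) (hXdp n) (hdPd n)
      (le_trans (hXdeg (dP n)) (by have := hdPdeg n; omega)) (hdPdeg n) (hcmX n) i j
    refine h0.congr_of_eventuallyEq ?_
    filter_upwards [hIt] with s hs
    rw [hXPP s hs n]
  -- the three pairing values
  have hA1 : ∀ n : ℕ, SInt Λ W μ (Polynomial.X * dP n) (P n t) t
      = (if n = 0 then 0 else Λ * (C n t * H (n-1) t) * (C n t)ᴴ) := by
    intro n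
    rw [SInt_X_mul]
    cases n with
    | zero =>
      rw [if_pos rfl, hdP0, SInt_zero_left Λ W μ (hmt t ht)]
    | succ m =>
      rw [hRXP t ht (m+1) (dP (m+1)), if_neg (Nat.succ_ne_zero m)]
      simp only [Nat.add_sub_cancel]
      rw [hOdPL (m+1) (m+2) (by omega), hOdPL (m+1) (m+1) le_rfl, Matrix.zero_mul,
        zero_add, zero_add, hK m]
      simp only [if_neg (Nat.succ_ne_zero m)]
  have hA2 : ∀ n : ℕ, SInt Λ W μ (Polynomial.X * (Polynomial.X * P n t)) (P n t) t
      = C (n+1) t * H n t + (B n t * H n t) * (B n t)ᴴ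
        + (if n = 0 then 0 else (C n t * H (n-1) t) * (C n t)ᴴ) := by
    intro n
    have hup : SInt Λ W μ (Polynomial.X * P n t) (P (n+1) t) t = C (n+1) t * H n t := by
      rw [SInt_X_mul, hRXP t ht (n+1) (P n t), if_neg (Nat.succ_ne_zero n)]
      simp only [Nat.add_sub_cancel]
      rw [horth' t ht n (n+2), horth' t ht n (n+1), horth' t ht n n,
        if_neg (by omega), if_neg (by omega), if_pos rfl, Matrix.zero_mul, zero_add,
        zero_add, hHC t ht n]
    rw [SInt_X_mul, hRXP t ht n (Polynomial.X * P n t), hup, hXPP t ht n]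
    cases n with
    | zero => rw [if_pos rfl, if_pos rfl]
    | succ m =>
      simp only [Nat.add_sub_cancel, if_neg (Nat.succ_ne_zero m)]
      rw [hXPQ t ht m]
  have hA3 : ∀ n : ℕ, SInt Λ W μ (Polynomial.X * P n t) (dP n) t
      = (if n = 0 then 0 else Λ * (C n t * H n t)) := by
    intro n
    cases n with
    | zero =>
      rw [if_pos rfl, hdP0, SInt_zero_right Λ W μ (hmt t ht)]
    | succ m =>
      have hA3' : SInt Λ W μ (P m t) (dP (m+1)) t = Λ * H (m+1) t := by
        rw [SInt_herm Λ W μ (hae t), hK m, hCH t ht m, Matrix.conjTranspose_mul,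
          hHherm t ht (m+1), ← (hcomm t ht (m+1)).2.2.1]
      rw [if_neg (Nat.succ_ne_zero m), hrec t ht m, SInt_add_left Λ W μ (hmt t ht),
        SInt_add_left Λ W μ (hmt t ht), SInt_C_mul_left Λ W μ (hmt t ht),
        SInt_C_mul_left Λ W μ (hmt t ht), hOdPR (m+1) (m+2) (by omega),
        hOdPR (m+1) (m+1) le_rfl, hA3', Matrix.mul_zero, zero_add, zero_add,
        ← mul_assoc, ← (hcomm t ht (m+1)).2.1, mul_assoc]
  have hdM : ∀ n : ℕ, ∀ i j : Fin N,
      HasDerivAt (fun s => (B n s * H n s) i j)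
        ((Λ * (C n t * H n t) - Λ * (C (n+1) t * H n t)
          - Λ * ((B n t * H n t) * (B n t)ᴴ)) i j) t := by
    intro n i j
    have h0 := hdBH n i j
    rw [hA1 n, hA2 n, hA3 n] at h0
    have hval : (if n = 0 then 0 else Λ * (C n t * H (n-1) t) * (C n t)ᴴ)
        - Λ * (C (n+1) t * H n t + (B n t * H n t) * (B n t)ᴴ
          + (if n = 0 then 0 else (C n t * H (n-1) t) * (C n t)ᴴ))
        + (if n = 0 then 0 else Λ * (C n t * H n t))
        = Λ * (C n t * H n t) - Λ * (C (n+1) t * H n t)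
          - Λ * ((B n t * H n t) * (B n t)ᴴ) := by
      cases n with
      | zero =>
        simp only [reduceIte]
        rw [hC0 t ht]
        noncomm_ring
      | succ m =>
        simp only [if_neg (Nat.succ_ne_zero m)]
        noncomm_ring
    rw [hval] at h0
    exact h0
  have hdet : ∀ n : ℕ, ∀ s ∈ I, IsUnit (H n s).det := fun n s hs =>
    ((hHpos n s hs).det_pos).ne'.isUnit
  have hdHinv : ∀ n : ℕ, ∀ i j : Fin N,
      HasDerivAt (fun s => (H n s)⁻¹ i j)
        (((H n t)⁻¹ * (Λ * B n t)) i j) t := by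
    intro n i j
    have h0 := hasDerivAt_inv_entry hIt (hdH n) (fun s hs => hdet n s hs) i j
    have hval : -((H n t)⁻¹ * (-(Λ * (B n t * H n t))) * (H n t)⁻¹)
        = (H n t)⁻¹ * (Λ * B n t) := by
      rw [mul_neg, neg_mul, neg_neg, mul_assoc]
      congr 1
      rw [← mul_assoc Λ (B n t) (H n t), mul_assoc (Λ * B n t),
        Matrix.mul_nonsing_inv _ (hdet n t ht), mul_one]
    rw [hval] at h0
    exact h0
  refine ⟨?_, ?_⟩
  · intro n i j
    have hCf : ∀ s ∈ I, C (n+1) s = H (n+1) s * (H n s)⁻¹ := by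
      intro s hs
      rw [← hCH s hs n, mul_assoc, Matrix.mul_nonsing_inv _ (hdet n s hs), mul_one]
    have h0 := hasDerivAt_mul_entry (F := fun s => H (n+1) s) (G := fun s => (H n s)⁻¹)
      (hdH (n+1)) (hdHinv n) i j
    have hval : (-(Λ * (B (n+1) t * H (n+1) t))) * (H n t)⁻¹
          + H (n+1) t * ((H n t)⁻¹ * (Λ * B n t))
        = Λ * (C (n+1) t * B n t - B (n+1) t * C (n+1) t) := by
      have c1 : H (n+1) t * (H n t)⁻¹ = C (n+1) t := (hCf t ht).symm
      have e1 : (-(Λ * (B (n+1) t * H (n+1) t))) * (H n t)⁻¹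
          = -(Λ * (B (n+1) t * C (n+1) t)) := by
        rw [Matrix.neg_mul, mul_assoc, mul_assoc, c1]
      have e2 : H (n+1) t * ((H n t)⁻¹ * (Λ * B n t)) = Λ * (C (n+1) t * B n t) := by
        rw [← mul_assoc, c1, ← mul_assoc, ← (hcomm t ht (n+1)).2.1, mul_assoc]
      rw [e1, e2, mul_sub]
      noncomm_ring
    rw [hval] at h0
    refine h0.congr_of_eventuallyEq ?_
    filter_upwards [hIt] with s hs
    rw [hCf s hs]
  · intro n i j
    have hBf : ∀ s ∈ I, B n s = (B n s * H n s) * (H n s)⁻¹ := by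
      intro s hs
      rw [mul_assoc, Matrix.mul_nonsing_inv _ (hdet n s hs), mul_one]
    have h0 := hasDerivAt_mul_entry (F := fun s => B n s * H n s) (G := fun s => (H n s)⁻¹)
      (hdM n) (hdHinv n) i j
    have hval : (Λ * (C n t * H n t) - Λ * (C (n+1) t * H n t)
          - Λ * ((B n t * H n t) * (B n t)ᴴ)) * (H n t)⁻¹
          + (B n t * H n t) * ((H n t)⁻¹ * (Λ * B n t))
        = Λ * (C n t - C (n+1) t) := by
      have hinv1 : H n t * (H n t)⁻¹ = 1 := Matrix.mul_nonsing_inv _ (hdet n t ht)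
      have e1 : (Λ * (C n t * H n t)) * (H n t)⁻¹ = Λ * C n t := by
        rw [mul_assoc, mul_assoc, hinv1, mul_one]
      have e1' : (Λ * (C (n+1) t * H n t)) * (H n t)⁻¹ = Λ * C (n+1) t := by
        rw [mul_assoc, mul_assoc, hinv1, mul_one]
      have e3 : (Λ * ((B n t * H n t) * (B n t)ᴴ)) * (H n t)⁻¹
          = Λ * (B n t * B n t) := by
        rw [mul_assoc (B n t) (H n t) ((B n t)ᴴ), ← hsym t ht n,
          ← mul_assoc (B n t) (B n t) (H n t), ← mul_assoc Λ,
          mul_assoc (Λ * (B n t * B n t)), hinv1, mul_one]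
      have e4 : (B n t * H n t) * ((H n t)⁻¹ * (Λ * B n t)) = Λ * (B n t * B n t) := by
        rw [← mul_assoc, mul_assoc (B n t) (H n t) (H n t)⁻¹, hinv1, mul_one,
          ← mul_assoc, ← (hcomm t ht n).1, mul_assoc]
      rw [Matrix.sub_mul, Matrix.sub_mul, e1, e1', e3, e4, mul_sub]
      noncomm_ring
    rw [hval] at h0
    refine h0.congr_of_eventuallyEq ?_
    filter_upwards [hIt] with s hs
    rw [← hBf s hs]
end

section
/- For every x, the matrix L(x) is invertible and its inverse is given explicitly by (L(x)^{−1})_{m,n} = i^{m−n} H_{m−n}(ix)/(m−n)! for m ≥ n and (L(x)^{−1})_{m,n} = 0 for m < n. Moreover, (dL/dx)(x) = A L(x) = L(x) A, where A = 2 ∑_{j=2}^N E_{j,j−1}. -/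
open Polynomial Matrix MeasureTheory

/-- Physicists' Hermite polynomials `H_n`, with generating function `exp (2xt - t²)`;
equivalently `H_0 = 1`, `H_{n+1}(x) = 2x H_n(x) - H_n'(x)`. -/
noncomputable def physHermite : ℕ → Polynomial ℂ
  | 0 => 1
  | n + 1 => Polynomial.C 2 * Polynomial.X * physHermite n -
      Polynomial.derivative (physHermite n)

/-- The lower triangular matrix `L(x)` with entries `L(x)_{m,n} = H_{m-n}(x)/(m-n)!`. -/
noncomputable def Lmat (N : ℕ) (z : ℂ) : Matrix (Fin N) (Fin N) ℂ :=
  Matrix.of fun m n =>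
    if (n : ℕ) ≤ (m : ℕ) then
      (physHermite ((m : ℕ) - (n : ℕ))).eval z / (Nat.factorial ((m : ℕ) - (n : ℕ)) : ℂ)
    else 0

/-- The matrix `A = 2 ∑_{j=2}^N E_{j,j-1}`. -/
def Amat (N : ℕ) : Matrix (Fin N) (Fin N) ℂ :=
  Matrix.of fun m n => if (m : ℕ) = (n : ℕ) + 1 then 2 else 0

/-- The diagonal matrix `J = diag(1, 2, …, N)`. -/
def Jmat (N : ℕ) : Matrix (Fin N) (Fin N) ℂ :=
  Matrix.diagonal fun k => ((k : ℕ) + 1 : ℂ)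

/-- `S^α = diag(α_1, …, α_N)`. -/
noncomputable def Smat {N : ℕ} (α : Fin N → ℝ) : Matrix (Fin N) (Fin N) ℂ :=
  Matrix.diagonal fun k => (α k : ℂ)

/-- `L^α(x) = S^α L(x) (S^α)⁻¹`. -/
noncomputable def LmatAlpha {N : ℕ} (α : Fin N → ℝ) (x : ℝ) : Matrix (Fin N) (Fin N) ℂ :=
  Smat α * Lmat N (x : ℂ) * (Smat α)⁻¹

/-- `A^α = S^α A (S^α)⁻¹`. -/
noncomputable def AmatAlpha {N : ℕ} (α : Fin N → ℝ) : Matrix (Fin N) (Fin N) ℂ :=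
  Smat α * Amat N * (Smat α)⁻¹

/-- The weight `W^{(α,ν)}(x) = e^{-x²} L^α(x) Δ (L^α(x))^*` where `Δ = diag(δ_1, …, δ_N)`. -/
noncomputable def Wmat {N : ℕ} (α : Fin N → ℝ) (δ : Fin N → ℝ) (x : ℝ) :
    Matrix (Fin N) (Fin N) ℂ :=
  (Real.exp (-x ^ 2) : ℂ) •
    (LmatAlpha α x * Matrix.diagonal (fun k => (δ k : ℂ)) * (LmatAlpha α x)ᴴ)

/-- Entrywise integral over `ℝ` (Lebesgue measure) of a matrix-valued function. -/
noncomputable def mInt {N : ℕ} (f : ℝ → Matrix (Fin N) (Fin N) ℂ) :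
    Matrix (Fin N) (Fin N) ℂ :=
  Matrix.of fun i j => ∫ x : ℝ, f x i j

/-- Rising factorial (Pochhammer symbol) `(a)_k = a (a+1) ⋯ (a+k-1)`. -/
noncomputable def risingFactorial (a : ℂ) (k : ℕ) : ℂ :=
  ∏ i ∈ Finset.range k, (a + i)

/-- `P` is the monic matrix-valued orthogonal polynomial of degree `n`
for the weight `Wf`: it is monic of degree `n` and `∫ P(x) Wf(x) xᵖ dx = 0` for `p < n`. -/
def IsMonicOrthPoly {N : ℕ} (Wf : ℝ → Matrix (Fin N) (Fin N) ℂ) (n : ℕ)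
    (P : Polynomial (Matrix (Fin N) (Fin N) ℂ)) : Prop :=
  P.Monic ∧ P.natDegree = n ∧
    ∀ p < n, mInt (fun x => (x : ℂ) ^ p • (evalM P x * Wf x)) = 0

open Finset
lemma physHermite_zero : physHermite 0 = 1 := rfl

lemma physHermite_succ (n : ℕ) : physHermite (n+1) =
    C 2 * X * physHermite n - derivative (physHermite n) := by rw [physHermite]

lemma deriv_physHermite : ∀ n : ℕ,
    derivative (physHermite (n+1)) = C (2*(n+1) : ℂ) * physHermite n
  | 0 => by
    simp [physHermite_succ, physHermite_zero]
  | n+1 => by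
    have IH := deriv_physHermite n
    rw [physHermite_succ (n+1), derivative_sub, derivative_mul, derivative_mul,
        derivative_C, derivative_X, IH, derivative_mul, derivative_C, physHermite_succ n]
    simp only [_root_.map_mul, _root_.map_add, _root_.map_one, map_ofNat, map_natCast,
      Nat.cast_add, Nat.cast_one]
    ring

noncomputable def Qpoly : ℕ → Polynomial ℂ
  | 0 => 1
  | n + 1 => -(Polynomial.C 2 * Polynomial.X * Qpoly n) -
      Polynomial.derivative (Qpoly n)

lemma Qpoly_zero : Qpoly 0 = 1 := rfl

lemma Qpoly_succ (n : ℕ) : Qpoly (n+1) =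
    -(C 2 * X * Qpoly n) - derivative (Qpoly n) := by rw [Qpoly]

lemma deriv_Qpoly : ∀ n : ℕ,
    derivative (Qpoly (n+1)) = C (-(2*(n+1)) : ℂ) * Qpoly n
  | 0 => by
    simp [Qpoly_succ, Qpoly_zero]
  | n+1 => by
    have IH := deriv_Qpoly n
    rw [Qpoly_succ (n+1), derivative_sub, derivative_neg, derivative_mul, derivative_mul,
        derivative_C, derivative_X, IH, derivative_mul, derivative_C, Qpoly_succ n]
    simp only [map_neg, _root_.map_mul, _root_.map_add, _root_.map_one, map_ofNat, map_natCast,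
      Nat.cast_add, Nat.cast_one]
    ring

noncomputable def Tpoly (d : ℕ) : Polynomial ℂ :=
  ∑ k ∈ range (d+1), C (d.choose k : ℂ) * physHermite k * Qpoly (d - k)

lemma deriv_Tpoly (d : ℕ) : derivative (Tpoly d) = 0 := by
  rw [Tpoly, derivative_sum]
  have h1 : ∀ k ∈ range (d+1),
      derivative (C (d.choose k : ℂ) * physHermite k * Qpoly (d - k))
      = C (d.choose k : ℂ) * derivative (physHermite k) * Qpoly (d-k)
        + C (d.choose k : ℂ) * physHermite k * derivative (Qpoly (d-k)) := by
    intro k _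
    rw [derivative_mul, derivative_mul, derivative_C]
    ring
  rw [Finset.sum_congr rfl h1, Finset.sum_add_distrib]
  have hA : ∑ k ∈ range (d+1), C (d.choose k : ℂ) * derivative (physHermite k) * Qpoly (d-k)
      = ∑ j ∈ range d,
        C (d.choose (j+1) : ℂ) * (C (2*(j+1) : ℂ) * physHermite j) * Qpoly (d-1-j) := by
    rw [Finset.sum_range_succ']
    simp only [physHermite_zero, derivative_one, mul_zero, zero_mul, add_zero]
    refine Finset.sum_congr rfl fun j hj => ?_
    rw [deriv_physHermite j]
    congr 2
    omega
  have hB : ∑ k ∈ range (d+1), C (d.choose k : ℂ) * physHermite k * derivative (Qpoly (d-k))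
      = ∑ j ∈ range d,
        C (d.choose j : ℂ) * physHermite j *
          (C (-(2*(((d-1-j : ℕ) : ℂ)+1))) * Qpoly (d-1-j)) := by
    rw [Finset.sum_range_succ]
    simp only [Nat.sub_self, Qpoly_zero, derivative_one, mul_zero, add_zero]
    refine Finset.sum_congr rfl fun j hj => ?_
    have hdj : d - j = (d-1-j) + 1 := by
      simp only [Finset.mem_range] at hj; omega
    rw [hdj, deriv_Qpoly]
  rw [hA, hB, ← Finset.sum_add_distrib]
  refine Finset.sum_eq_zero fun j hj => ?_
  simp only [Finset.mem_range] at hj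
  have h2 : d.choose (j+1) * (j+1) = d.choose j * ((d-1-j)+1) := by
    have h3 : d-1-j+1 = d-j := by omega
    rw [h3]
    exact Nat.choose_succ_right_eq d j
  have hc : ((d.choose (j+1) : ℕ) : Polynomial ℂ) * ((j : Polynomial ℂ)+1)
      = ((d.choose j : ℕ) : Polynomial ℂ) * (((d-1-j : ℕ) : Polynomial ℂ) + 1) := by
    exact_mod_cast h2
  simp only [_root_.map_mul, _root_.map_add, _root_.map_one, map_ofNat, map_natCast, map_neg]
  linear_combination 2 * physHermite j * Qpoly (d-1-j) * hc

lemma Tpoly_succ (d : ℕ) : Tpoly (d+1) = - derivative (Tpoly d) := by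
  have hS1 : ∑ k ∈ range (d+1), C (d.choose k : ℂ) * physHermite k * Qpoly ((d-k)+1)
      = ∑ j ∈ range (d+1), C (d.choose (j+1) : ℂ) * physHermite (j+1) * Qpoly (d-j)
        + Qpoly (d+1) := by
    rw [Finset.sum_range_succ' (fun k => C (d.choose k : ℂ) * physHermite k * Qpoly ((d-k)+1)) d]
    congr 1
    · rw [Finset.sum_range_succ]
      simp only [Nat.choose_succ_self, Nat.cast_zero, map_zero, zero_mul, add_zero]
      refine Finset.sum_congr rfl fun j hj => ?_
      simp only [Finset.mem_range] at hj
      have : d - (j+1) + 1 = d - j := by omega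
      rw [this]
    · simp [physHermite_zero]
  have hT : Tpoly (d+1) = ∑ k ∈ range (d+1), C (d.choose k : ℂ) *
      (physHermite k * Qpoly ((d-k)+1) + physHermite (k+1) * Qpoly (d-k)) := by
    rw [Tpoly, Finset.sum_range_succ'
      (fun k => C ((d+1).choose k : ℂ) * physHermite k * Qpoly (d+1-k)) (d+1)]
    have e1 : ∀ j ∈ range (d+1),
        C ((d+1).choose (j+1) : ℂ) * physHermite (j+1) * Qpoly (d+1-(j+1))
        = C (d.choose j : ℂ) * physHermite (j+1) * Qpoly (d-j)
          + C (d.choose (j+1) : ℂ) * physHermite (j+1) * Qpoly (d-j) := by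
      intro j hj
      have : d + 1 - (j+1) = d - j := by omega
      rw [this, Nat.choose_succ_succ, Nat.cast_add, map_add]
      ring
    rw [Finset.sum_congr rfl e1, Finset.sum_add_distrib]
    simp only [mul_add, ← mul_assoc]
    rw [Finset.sum_add_distrib, hS1]
    simp only [Nat.choose_zero_right, Nat.cast_one, _root_.map_one, one_mul, physHermite_zero,
      Nat.sub_zero]
    ring
  rw [hT, show -derivative (Tpoly d) = ∑ k ∈ range (d+1),
      -derivative (C (d.choose k : ℂ) * physHermite k * Qpoly (d-k)) from by
    rw [Tpoly, derivative_sum, Finset.sum_neg_distrib]]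
  refine Finset.sum_congr rfl fun k hk => ?_
  rw [Qpoly_succ, physHermite_succ, derivative_mul, derivative_mul, derivative_C]
  ring

lemma Tpoly_eq_zero (d : ℕ) (hd : d ≠ 0) : Tpoly d = 0 := by
  obtain ⟨e, rfl⟩ := Nat.exists_eq_succ_of_ne_zero hd
  rw [Tpoly_succ, deriv_Tpoly, neg_zero]

lemma Qpoly_eq : ∀ n : ℕ, Qpoly n
    = C (Complex.I ^ n) * (physHermite n).comp (C Complex.I * X)
  | 0 => by simp [Qpoly_zero, physHermite_zero]
  | n+1 => by
    have IH := Qpoly_eq n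
    have hI : (C Complex.I : Polynomial ℂ) * C Complex.I = -1 := by
      rw [← C_mul, Complex.I_mul_I, map_neg, _root_.map_one]
    have hd : derivative ((physHermite n).comp (C Complex.I * X))
        = C Complex.I * (derivative (physHermite n)).comp (C Complex.I * X) := by
      rw [derivative_comp, derivative_mul, derivative_C, derivative_X]
      ring
    rw [Qpoly_succ, physHermite_succ, sub_comp, mul_comp, mul_comp, C_comp, X_comp, IH,
        derivative_mul, derivative_C, hd]
    simp only [pow_succ, _root_.map_mul]
    linear_combination (-(C 2 * X * C (Complex.I ^ n) *
        (physHermite n).comp (C Complex.I * X))) * hI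

lemma Qpoly_eval (n : ℕ) (z : ℂ) :
    (Qpoly n).eval z = Complex.I ^ n * (physHermite n).eval (Complex.I * z) := by
  rw [Qpoly_eq]
  simp [eval_comp]

lemma key_sum (d : ℕ) (z : ℂ) :
    ∑ k ∈ range (d+1), (physHermite (d-k)).eval z / ((d-k).factorial : ℂ)
      * (Complex.I ^ k * (physHermite k).eval (Complex.I * z) / (k.factorial : ℂ))
    = if d = 0 then 1 else 0 := by
  have hrefl : ∑ k ∈ range (d+1), (physHermite (d-k)).eval z / ((d-k).factorial : ℂ)
      * (Complex.I ^ k * (physHermite k).eval (Complex.I * z) / (k.factorial : ℂ))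
      = ∑ k ∈ range (d+1), (physHermite k).eval z / (k.factorial : ℂ)
      * (Complex.I ^ (d-k) * (physHermite (d-k)).eval (Complex.I * z)
        / ((d-k).factorial : ℂ)) := by
    rw [← Finset.sum_range_reflect]
    refine Finset.sum_congr rfl fun k hk => ?_
    simp only [Finset.mem_range] at hk
    have h1 : d + 1 - 1 - k = d - k := by omega
    have h2 : d - (d - k) = k := by omega
    rw [h1, h2]
  rw [hrefl]
  have hterm : ∀ k ∈ range (d+1), (physHermite k).eval z / (k.factorial : ℂ)
      * (Complex.I ^ (d-k) * (physHermite (d-k)).eval (Complex.I * z) / ((d-k).factorial : ℂ))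
      = (d.choose k : ℂ) * (physHermite k).eval z * (Qpoly (d-k)).eval z
        / (d.factorial : ℂ) := by
    intro k hk
    simp only [Finset.mem_range] at hk
    rw [Qpoly_eval]
    have hfac : (d.choose k : ℂ) * (k.factorial : ℂ) * ((d-k).factorial : ℂ)
        = (d.factorial : ℂ) := by
      exact_mod_cast Nat.choose_mul_factorial_mul_factorial (by omega : k ≤ d)
    have h1 : (k.factorial : ℂ) ≠ 0 := Nat.cast_ne_zero.mpr (Nat.factorial_ne_zero k)
    have h2 : ((d-k).factorial : ℂ) ≠ 0 := Nat.cast_ne_zero.mpr (Nat.factorial_ne_zero (d-k))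
    have h3 : (d.factorial : ℂ) ≠ 0 := Nat.cast_ne_zero.mpr (Nat.factorial_ne_zero d)
    field_simp
    linear_combination (-((physHermite k).eval z
      * (physHermite (d-k)).eval (Complex.I * z))) * hfac
  rw [Finset.sum_congr rfl hterm, ← Finset.sum_div]
  have hs : ∑ k ∈ range (d+1), (d.choose k : ℂ) * (physHermite k).eval z
      * (Qpoly (d-k)).eval z = (Tpoly d).eval z := by
    rw [Tpoly, eval_finset_sum]
    refine Finset.sum_congr rfl fun k hk => ?_
    simp
  rw [hs]
  by_cases hd : d = 0
  · subst hd
    simp [Tpoly, physHermite_zero, Qpoly_zero]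
  · rw [Tpoly_eq_zero d hd]
    simp [hd]

noncomputable def Mmat (N : ℕ) (z : ℂ) : Matrix (Fin N) (Fin N) ℂ :=
  Matrix.of (fun m n : Fin N =>
      if (n : ℕ) ≤ (m : ℕ) then
        Complex.I ^ ((m : ℕ) - (n : ℕ)) *
          (physHermite ((m : ℕ) - (n : ℕ))).eval (Complex.I * z) /
          (Nat.factorial ((m : ℕ) - (n : ℕ)) : ℂ)
      else 0)

lemma Lmat_mul_Mmat (N : ℕ) (z : ℂ) : Lmat N z * Mmat N z = 1 := by
  ext m p
  rw [Matrix.mul_apply, Matrix.one_apply]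
  set g : ℕ → ℂ := fun j =>
    (if j ≤ (m : ℕ) then (physHermite ((m : ℕ) - j)).eval z
        / (Nat.factorial ((m : ℕ) - j) : ℂ) else 0) *
    (if (p : ℕ) ≤ j then Complex.I ^ (j - (p : ℕ)) *
        (physHermite (j - (p : ℕ))).eval (Complex.I * z)
        / (Nat.factorial (j - (p : ℕ)) : ℂ) else 0) with hg
  have hsum : ∑ n : Fin N, Lmat N z m n * Mmat N z n p = ∑ j ∈ range N, g j := by
    rw [← Fin.sum_univ_eq_sum_range g N]
    rfl
  rw [hsum]
  by_cases hpm : (p : ℕ) ≤ (m : ℕ)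
  · have hsub : Finset.Ico (p : ℕ) ((m : ℕ) + 1) ⊆ range N := by
      intro j hj
      simp only [Finset.mem_Ico] at hj
      exact Finset.mem_range.mpr (lt_of_lt_of_le hj.2 m.isLt)
    rw [← Finset.sum_subset hsub (fun j hjr hji => ?_)]
    · rw [Finset.sum_Ico_eq_sum_range]
      have hlen : (m : ℕ) + 1 - (p : ℕ) = ((m : ℕ) - (p : ℕ)) + 1 := by omega
      rw [hlen]
      have hterm : ∀ i ∈ range (((m : ℕ) - (p : ℕ)) + 1), g ((p : ℕ) + i)
          = (physHermite (((m : ℕ) - (p : ℕ)) - i)).eval z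
              / (Nat.factorial (((m : ℕ) - (p : ℕ)) - i) : ℂ)
            * (Complex.I ^ i * (physHermite i).eval (Complex.I * z)
              / (Nat.factorial i : ℂ)) := by
        intro i hi
        simp only [Finset.mem_range] at hi
        have h1 : (p : ℕ) + i ≤ (m : ℕ) := by omega
        have h2 : (p : ℕ) ≤ (p : ℕ) + i := by omega
        rw [hg]
        simp only [if_pos h1, if_pos h2]
        have h3 : (m : ℕ) - ((p : ℕ) + i) = ((m : ℕ) - (p : ℕ)) - i := by omega
        have h4 : (p : ℕ) + i - (p : ℕ) = i := by omega
        rw [h3, h4]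
      rw [Finset.sum_congr rfl hterm, key_sum]
      by_cases he : m = p
      · subst he
        simp
      · have hne : (m : ℕ) ≠ (p : ℕ) := fun h => he (Fin.ext h)
        rw [if_neg (by omega : ¬ (m : ℕ) - (p : ℕ) = 0), if_neg he]
    · simp only [Finset.mem_Ico, not_and_or, not_le, not_lt] at hji
      rw [hg]
      rcases hji with h | h
      · simp only [if_neg (by omega : ¬ (p : ℕ) ≤ j), mul_zero]
      · simp only [if_neg (by omega : ¬ j ≤ (m : ℕ)), zero_mul]
  · rw [if_neg (fun h => hpm (by rw [h]))]
    refine Finset.sum_eq_zero fun j hj => ?_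
    rw [hg]
    by_cases h1 : j ≤ (m : ℕ)
    · simp only [if_neg (by omega : ¬ (p : ℕ) ≤ j), mul_zero]
    · simp only [if_neg h1, zero_mul]

lemma Amat_mul_Lmat_apply (N : ℕ) (z : ℂ) (m n : Fin N) :
    (Amat N * Lmat N z) m n =
      if (n : ℕ) + 1 ≤ (m : ℕ) then
        2 * (physHermite ((m : ℕ) - ((n : ℕ) + 1))).eval z
          / (Nat.factorial ((m : ℕ) - ((n : ℕ) + 1)) : ℂ)
      else 0 := by
  rw [Matrix.mul_apply]
  by_cases hm : (m : ℕ) = 0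
  · rw [Finset.sum_eq_zero fun k _ => ?_]
    · rw [if_neg (by omega)]
    · have : ¬ (m : ℕ) = (k : ℕ) + 1 := by omega
      simp only [Amat, Matrix.of_apply, if_neg this, zero_mul]
  · have hmlt : (m : ℕ) - 1 < N := by omega
    set k0 : Fin N := ⟨(m : ℕ) - 1, hmlt⟩ with hk0
    rw [Finset.sum_eq_single_of_mem k0 (Finset.mem_univ k0) (fun k _ hk => ?_)]
    · have hval : (m : ℕ) = (k0 : ℕ) + 1 := by simp [hk0]; omega
      simp only [Amat, Lmat, Matrix.of_apply, if_pos hval]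
      by_cases hnm : (n : ℕ) + 1 ≤ (m : ℕ)
      · have h1 : (n : ℕ) ≤ (k0 : ℕ) := by simp [hk0]; omega
        rw [if_pos h1, if_pos hnm]
        have h2 : (k0 : ℕ) - (n : ℕ) = (m : ℕ) - ((n : ℕ) + 1) := by simp [hk0]; omega
        rw [h2]
        ring
      · have h1 : ¬ (n : ℕ) ≤ (k0 : ℕ) := by simp [hk0]; omega
        rw [if_neg h1, if_neg hnm, mul_zero]
    · have : ¬ (m : ℕ) = (k : ℕ) + 1 := by
        intro h
        exact hk (Fin.ext (by simp [hk0]; omega))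
      simp only [Amat, Matrix.of_apply, if_neg this, zero_mul]

lemma Lmat_mul_Amat_apply (N : ℕ) (z : ℂ) (m n : Fin N) :
    (Lmat N z * Amat N) m n =
      if (n : ℕ) + 1 ≤ (m : ℕ) then
        2 * (physHermite ((m : ℕ) - ((n : ℕ) + 1))).eval z
          / (Nat.factorial ((m : ℕ) - ((n : ℕ) + 1)) : ℂ)
      else 0 := by
  rw [Matrix.mul_apply]
  by_cases hn : (n : ℕ) + 1 < N
  · set k0 : Fin N := ⟨(n : ℕ) + 1, hn⟩ with hk0
    rw [Finset.sum_eq_single_of_mem k0 (Finset.mem_univ k0) (fun k _ hk => ?_)]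
    · have hval : (k0 : ℕ) = (n : ℕ) + 1 := rfl
      simp only [Amat, Lmat, Matrix.of_apply, if_pos hval]
      by_cases hnm : (n : ℕ) + 1 ≤ (m : ℕ)
      · rw [if_pos (show (k0 : ℕ) ≤ (m : ℕ) from hnm), if_pos hnm]
        norm_num
        ring
      · rw [if_neg (show ¬ (k0 : ℕ) ≤ (m : ℕ) from hnm), if_neg hnm, zero_mul]
    · have : ¬ (k : ℕ) = (n : ℕ) + 1 := fun h => hk (Fin.ext h)
      simp only [Amat, Matrix.of_apply, if_neg this, mul_zero]
  · rw [if_neg (by omega : ¬ (n : ℕ) + 1 ≤ (m : ℕ)),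
      Finset.sum_eq_zero fun k _ => ?_]
    have : ¬ (k : ℕ) = (n : ℕ) + 1 := by omega
    simp only [Amat, Matrix.of_apply, if_neg this, mul_zero]

lemma Lmat_hasDerivAt (N : ℕ) (x : ℝ) (m n : Fin N) :
    HasDerivAt (fun y : ℝ => Lmat N (y : ℂ) m n)
      ((Amat N * Lmat N (x : ℂ)) m n) x := by
  rw [Amat_mul_Lmat_apply]
  by_cases h : (n : ℕ) ≤ (m : ℕ)
  · have hfun : (fun y : ℝ => Lmat N (y : ℂ) m n)
        = fun y : ℝ => (physHermite ((m : ℕ) - (n : ℕ))).eval (y : ℂ)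
          / (Nat.factorial ((m : ℕ) - (n : ℕ)) : ℂ) := by
      funext y
      simp only [Lmat, Matrix.of_apply, if_pos h]
    rw [hfun]
    have hD : HasDerivAt (fun y : ℝ =>
        (physHermite ((m : ℕ) - (n : ℕ))).eval (y : ℂ)
          / (Nat.factorial ((m : ℕ) - (n : ℕ)) : ℂ))
        ((derivative (physHermite ((m : ℕ) - (n : ℕ)))).eval (x : ℂ)
          / (Nat.factorial ((m : ℕ) - (n : ℕ)) : ℂ)) x := by
      exact (((physHermite ((m : ℕ) - (n : ℕ))).hasDerivAt
        ((x : ℝ) : ℂ)).comp_ofReal).div_const _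
    convert hD using 1
    by_cases h0 : (m : ℕ) - (n : ℕ) = 0
    · rw [h0, if_neg (by omega), physHermite_zero, derivative_one, eval_zero, zero_div]
    · set e := ((m : ℕ) - (n : ℕ)) - 1 with he
      have hsucc : (m : ℕ) - (n : ℕ) = e + 1 := by omega
      rw [hsucc]
      have h1 : (n : ℕ) + 1 ≤ (m : ℕ) := by omega
      rw [if_pos h1, deriv_physHermite e]
      have h2 : (m : ℕ) - ((n : ℕ) + 1) = e := by omega
      rw [h2, eval_mul, eval_C, Nat.factorial_succ]
      have h5 : (((e+1) * e.factorial : ℕ) : ℂ) = ((e : ℂ) + 1) * (e.factorial : ℂ) := by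
        push_cast; ring
      rw [h5]
      have h3 : ((e : ℂ) + 1) ≠ 0 := by exact_mod_cast Nat.succ_ne_zero e
      have h4 : ((e.factorial : ℕ) : ℂ) ≠ 0 :=
        Nat.cast_ne_zero.mpr (Nat.factorial_ne_zero e)
      field_simp
  · have hfun : (fun y : ℝ => Lmat N (y : ℂ) m n) = fun _ : ℝ => (0 : ℂ) := by
      funext y
      simp only [Lmat, Matrix.of_apply, if_neg h]
    rw [hfun, if_neg (by omega)]
    exact hasDerivAt_const x 0


/-- Proposition 2.1: `L(x)` is invertible with explicit inverse given by Hermite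
polynomials on the imaginary axis, and `L'(x) = A L(x) = L(x) A`. -/
theorem stmt_2 (N : ℕ) (hN : 1 ≤ N) (x : ℝ) :
    IsUnit (Lmat N (x : ℂ)) ∧
    (Lmat N (x : ℂ))⁻¹ = Matrix.of (fun m n : Fin N =>
      if (n : ℕ) ≤ (m : ℕ) then
        Complex.I ^ ((m : ℕ) - (n : ℕ)) *
          (physHermite ((m : ℕ) - (n : ℕ))).eval (Complex.I * (x : ℂ)) /
          (Nat.factorial ((m : ℕ) - (n : ℕ)) : ℂ)
      else 0) ∧
    (∀ m n : Fin N, HasDerivAt (fun y : ℝ => Lmat N (y : ℂ) m n)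
      ((Amat N * Lmat N (x : ℂ)) m n) x) ∧
    Amat N * Lmat N (x : ℂ) = Lmat N (x : ℂ) * Amat N := by
  have hLM := Lmat_mul_Mmat N (x : ℂ)
  refine ⟨⟨⟨Lmat N (x : ℂ), Mmat N (x : ℂ), hLM, mul_eq_one_comm.mp hLM⟩, rfl⟩,
    Matrix.inv_eq_right_inv hLM, fun m n => Lmat_hasDerivAt N x m n, ?_⟩
  ext m n
  rw [Amat_mul_Lmat_apply, Lmat_mul_Amat_apply]
end

section
/- The zeroth moment ∫_ℝ W^{(α,ν)}(x) dx is a diagonal matrix whose (m,m) entry equals α_m² δ_1^{(ν)} 2^{m−1} √π (−N − c^{(ν)}/d^{(ν)})_{m−1} / ( (m−1)! (1−N)_{m−1} ); in particular this matrix is invertible. -/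
open Polynomial Matrix MeasureTheory

open Polynomial MeasureTheory Filter Topology

/-- Real physicists' Hermite polynomials. -/
noncomputable def pH : ℕ → Polynomial ℝ
  | 0 => 1
  | n + 1 => Polynomial.C 2 * Polynomial.X * pH n - Polynomial.derivative (pH n)

lemma pH_succ (n : ℕ) : pH (n + 1) = Polynomial.C 2 * Polynomial.X * pH n -
    Polynomial.derivative (pH n) := rfl

lemma pH_deriv : ∀ n : ℕ, Polynomial.derivative (pH (n + 1)) =
    Polynomial.C (2 * (n + 1) : ℝ) * pH n := by
  intro n
  induction n with
  | zero =>
    rw [pH_succ]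
    simp [show pH 0 = 1 from rfl]
  | succ n ih =>
    have hd : Polynomial.derivative (pH n) = Polynomial.C 2 * Polynomial.X * pH n - pH (n+1) := by
      rw [pH_succ n]; ring
    have hC : Polynomial.C (2 * ((n:ℝ) + 1 + 1)) =
        Polynomial.C 2 + Polynomial.C (2 * ((n:ℝ) + 1)) := by
      rw [← Polynomial.C_add]; congr 1; ring
    rw [pH_succ (n+1), derivative_sub, derivative_mul, derivative_mul, derivative_C,
      derivative_X, ih, derivative_mul, derivative_C, hd]
    push_cast
    rw [hC]
    ring

lemma tendsto_pow_gauss_top (n : ℕ) :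
    Tendsto (fun x : ℝ => x ^ n * Real.exp (-x ^ 2)) atTop (𝓝 0) := by
  apply squeeze_zero_norm' (a := fun x : ℝ => x ^ n * Real.exp (-x))
  · filter_upwards [eventually_ge_atTop (1 : ℝ)] with x hx
    have h1 : (0:ℝ) ≤ x := le_trans zero_le_one hx
    rw [Real.norm_eq_abs, abs_mul, abs_pow, abs_of_nonneg h1,
      abs_of_nonneg (Real.exp_pos _).le]
    have : Real.exp (-x ^ 2) ≤ Real.exp (-x) := by
      apply Real.exp_le_exp.2
      nlinarith
    exact mul_le_mul_of_nonneg_left this (pow_nonneg h1 n)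
  · exact Real.tendsto_pow_mul_exp_neg_atTop_nhds_zero n

lemma tendsto_pow_gauss_bot (n : ℕ) :
    Tendsto (fun x : ℝ => x ^ n * Real.exp (-x ^ 2)) atBot (𝓝 0) := by
  apply squeeze_zero_norm' (a := fun x : ℝ => |x| ^ n * Real.exp (-|x|))
  · filter_upwards [eventually_le_atBot (-1 : ℝ)] with x hx
    rw [Real.norm_eq_abs, abs_mul, abs_pow, abs_of_nonneg (Real.exp_pos _).le]
    have : Real.exp (-x ^ 2) ≤ Real.exp (-|x|) := by
      apply Real.exp_le_exp.2
      have : 1 ≤ |x| := by rw [abs_of_nonpos (by linarith)]; linarith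
      nlinarith [sq_abs x]
    exact mul_le_mul_of_nonneg_left this (pow_nonneg (abs_nonneg x) n)
  · exact ((Real.tendsto_pow_mul_exp_neg_atTop_nhds_zero n).comp tendsto_abs_atBot_atTop)

lemma gauss_poly_eq_sum (p : Polynomial ℝ) : (fun x : ℝ => Real.exp (-x ^ 2) * p.eval x)
    = fun x => ∑ i ∈ Finset.range (p.natDegree + 1),
        p.coeff i * (x ^ i * Real.exp (-x ^ 2)) := by
  funext x
  rw [Polynomial.eval_eq_sum_range, Finset.mul_sum]
  exact Finset.sum_congr rfl fun i _ => by ring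

lemma tendsto_gauss_poly_top (p : Polynomial ℝ) :
    Tendsto (fun x : ℝ => Real.exp (-x ^ 2) * p.eval x) atTop (𝓝 0) := by
  rw [gauss_poly_eq_sum]
  have : (0 : ℝ) = ∑ i ∈ Finset.range (p.natDegree + 1), p.coeff i * 0 := by simp
  rw [this]
  exact tendsto_finset_sum _ fun i _ => (tendsto_pow_gauss_top i).const_mul _

lemma tendsto_gauss_poly_bot (p : Polynomial ℝ) :
    Tendsto (fun x : ℝ => Real.exp (-x ^ 2) * p.eval x) atBot (𝓝 0) := by
  rw [gauss_poly_eq_sum]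
  have : (0 : ℝ) = ∑ i ∈ Finset.range (p.natDegree + 1), p.coeff i * 0 := by simp
  rw [this]
  exact tendsto_finset_sum _ fun i _ => (tendsto_pow_gauss_bot i).const_mul _

lemma integrable_pow_gauss (n : ℕ) :
    Integrable (fun x : ℝ => x ^ n * Real.exp (-x ^ 2)) := by
  have h := integrable_rpow_mul_exp_neg_mul_sq (b := 1) one_pos
    (s := (n : ℝ)) (lt_of_lt_of_le neg_one_lt_zero (Nat.cast_nonneg n))
  simpa [Real.rpow_natCast, neg_mul, one_mul] using h

lemma integrable_gauss_poly (p : Polynomial ℝ) :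
    Integrable (fun x : ℝ => Real.exp (-x ^ 2) * p.eval x) := by
  rw [gauss_poly_eq_sum]
  exact integrable_finset_sum _ fun i _ => ((integrable_pow_gauss i).const_mul _)

lemma hasDerivAt_gauss_mul (p : Polynomial ℝ) (x : ℝ) :
    HasDerivAt (fun y : ℝ => Real.exp (-y ^ 2) * p.eval y)
      (Real.exp (-x ^ 2) * ((Polynomial.derivative p).eval x - 2 * x * p.eval x)) x := by
  have h1 : HasDerivAt (fun y : ℝ => Real.exp (-y ^ 2)) (Real.exp (-x ^ 2) * (-(2 * x))) x := by
    have := ((hasDerivAt_pow 2 x).neg).exp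
    simpa [pow_one] using this
  have h2 := p.hasDerivAt x
  have : HasDerivAt (fun y : ℝ => Real.exp (-y ^ 2) * p.eval y) _ x := h1.mul h2
  convert this using 1
  ring

lemma integral_deriv_zero (f f' : ℝ → ℝ) (hderiv : ∀ x, HasDerivAt f (f' x) x)
    (hint : Integrable f') (htop : Tendsto f atTop (𝓝 0))
    (hbot : Tendsto f atBot (𝓝 0)) : ∫ x : ℝ, f' x = 0 := by
  rw [← intervalIntegral.integral_Iic_add_Ioi (b := (0:ℝ)) hint.integrableOn hint.integrableOn]
  rw [integral_Iic_of_hasDerivAt_of_tendsto' (fun x _ => hderiv x) hint.integrableOn hbot,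
    integral_Ioi_of_hasDerivAt_of_tendsto' (fun x _ => hderiv x) hint.integrableOn htop]
  ring

lemma ibp_step (n : ℕ) (q : Polynomial ℝ) :
    ∫ x : ℝ, Real.exp (-x ^ 2) * ((pH (n + 1)).eval x * q.eval x) =
      ∫ x : ℝ, Real.exp (-x ^ 2) * ((pH n).eval x * (Polynomial.derivative q).eval x) := by
  set r : Polynomial ℝ := pH n * Polynomial.derivative q - pH (n + 1) * q with hr
  have hzero : ∫ x : ℝ, Real.exp (-x ^ 2) * r.eval x = 0 := by
    apply integral_deriv_zero (f := fun x => Real.exp (-x ^ 2) * (pH n * q).eval x)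
    · intro x
      have h := hasDerivAt_gauss_mul (pH n * q) x
      convert h using 1
      rw [hr]
      have hd : Polynomial.derivative (pH n) = Polynomial.C 2 * Polynomial.X * pH n
          - pH (n + 1) := by rw [pH_succ n]; ring
      simp only [Polynomial.derivative_mul, hd, Polynomial.eval_add, Polynomial.eval_mul,
        Polynomial.eval_sub, Polynomial.eval_C, Polynomial.eval_X]
      ring
    · exact integrable_gauss_poly r
    · exact tendsto_gauss_poly_top _
    · exact tendsto_gauss_poly_bot _
  have h1 := integrable_gauss_poly (pH n * Polynomial.derivative q)
  have h2 := integrable_gauss_poly (pH (n + 1) * q)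
  have : (fun x : ℝ => Real.exp (-x ^ 2) * r.eval x) =
      fun x => Real.exp (-x ^ 2) * (pH n * Polynomial.derivative q).eval x
        - Real.exp (-x ^ 2) * (pH (n + 1) * q).eval x := by
    funext x; rw [hr]; simp [Polynomial.eval_sub]; ring
  rw [this, integral_sub h1 h2, sub_eq_zero] at hzero
  simp only [Polynomial.eval_mul] at hzero
  exact hzero.symm

lemma gauss_pH_orth : ∀ a b : ℕ, (∫ x : ℝ, Real.exp (-x ^ 2) * ((pH a).eval x * (pH b).eval x))
    = if a = b then Real.sqrt Real.pi * 2 ^ a * a.factorial else 0 := by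
  intro a
  induction a with
  | zero =>
    intro b
    cases b with
    | zero =>
      have h := integral_gaussian 1
      simp only [show pH 0 = 1 from rfl, Polynomial.eval_one, mul_one, if_pos rfl]
      simp only [neg_mul, one_mul] at h
      simp [h]
    | succ m =>
      rw [if_neg (by omega)]
      have h := ibp_step m (1 : Polynomial ℝ)
      simp only [Polynomial.eval_one, Polynomial.derivative_one, Polynomial.eval_zero,
        mul_zero, mul_one, integral_zero] at h
      rw [show (pH 0) = 1 from rfl]
      simpa [mul_comm] using h
  | succ n ih =>
    intro b
    rw [ibp_step n (pH b)]
    cases b with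
    | zero =>
      rw [if_neg (by omega)]
      simp [show pH 0 = 1 from rfl]
    | succ m =>
      rw [pH_deriv m]
      have : ∀ x : ℝ, Real.exp (-x ^ 2) * ((pH n).eval x *
          (Polynomial.C (2 * ((m:ℝ) + 1)) * pH m).eval x) =
          (2 * ((m:ℝ) + 1)) * (Real.exp (-x ^ 2) * ((pH n).eval x * (pH m).eval x)) := by
        intro x; simp only [Polynomial.eval_mul, Polynomial.eval_C]; ring
      rw [show (fun x : ℝ => Real.exp (-x ^ 2) * ((pH n).eval x *
          (Polynomial.C (2 * ((m:ℝ) + 1)) * pH m).eval x)) =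
          fun x : ℝ => (2 * ((m:ℝ) + 1)) * (Real.exp (-x ^ 2) *
            ((pH n).eval x * (pH m).eval x)) from funext this]
      rw [integral_const_mul, ih m]
      by_cases h : n = m
      · subst h
        rw [if_pos rfl, if_pos rfl, Nat.factorial_succ]
        push_cast
        ring
      · rw [if_neg h, if_neg (by omega), mul_zero]

lemma rf_zero (a : ℂ) : risingFactorial a 0 = 1 := Finset.prod_range_zero _

lemma rf_succ (a : ℂ) (k : ℕ) : risingFactorial a (k + 1) = risingFactorial a k * (a + k) :=
  Finset.prod_range_succ _ _

lemma rf_succ_left (a : ℂ) (k : ℕ) :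
    risingFactorial a (k + 1) = a * risingFactorial (a + 1) k := by
  rw [risingFactorial, Finset.prod_range_succ']
  simp only [Nat.cast_zero, add_zero]
  rw [mul_comm]
  congr 1
  apply Finset.prod_congr rfl
  intro i _
  push_cast
  ring

lemma rf_add (a : ℂ) (j l : ℕ) :
    risingFactorial a (j + l) = risingFactorial a j * risingFactorial (a + j) l := by
  rw [risingFactorial, Finset.prod_range_add]
  congr 1
  apply Finset.prod_congr rfl
  intro i _
  push_cast
  ring

lemma chu (m : ℕ) : ∀ a b : ℂ,
    ∑ k ∈ Finset.range (m + 1), ((-1 : ℂ)) ^ k * (m.choose k : ℂ) *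
      risingFactorial a k * risingFactorial (b + k) (m - k) = risingFactorial (b - a) m := by
  induction m with
  | zero => intro a b; simp [rf_zero]
  | succ m ih =>
    intro a b
    rw [Finset.sum_range_succ']
    have hsplit : ∀ k ∈ Finset.range (m + 1),
        ((-1 : ℂ)) ^ (k + 1) * ((m + 1).choose (k + 1) : ℂ) *
          risingFactorial a (k + 1) * risingFactorial (b + (k + 1 : ℕ)) (m + 1 - (k + 1)) =
        (-a) * ((-1 : ℂ)) ^ k * (m.choose k : ℂ) * risingFactorial (a + 1) k *
            risingFactorial ((b + 1) + (k : ℕ)) (m - k) +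
          ((-1 : ℂ)) ^ (k + 1) * (m.choose (k + 1) : ℂ) * risingFactorial a (k + 1) *
            risingFactorial (b + ((k + 1 : ℕ) : ℂ)) (m + 1 - (k + 1)) := by
      intro k _
      rw [Nat.choose_succ_succ, Nat.cast_add, Nat.succ_sub_succ, rf_succ_left]
      have : (b + ((k:ℕ) + 1 : ℕ) : ℂ) = (b + 1) + (k : ℕ) := by push_cast; ring
      rw [this]
      push_cast
      ring
    rw [Finset.sum_congr rfl hsplit, Finset.sum_add_distrib]
    have e1 : ∑ k ∈ Finset.range (m + 1), (-a) * ((-1 : ℂ)) ^ k * (m.choose k : ℂ) *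
        risingFactorial (a + 1) k * risingFactorial ((b + 1) + (k : ℕ)) (m - k) =
        (-a) * risingFactorial (b - a) m := by
      have hih := ih (a + 1) (b + 1)
      rw [show (b + 1 - (a + 1) : ℂ) = b - a by ring] at hih
      rw [← hih, Finset.mul_sum]
      apply Finset.sum_congr rfl; intro k _; ring
    rw [e1]
    have e2 : (∑ k ∈ Finset.range (m + 1), ((-1 : ℂ)) ^ (k + 1) * (m.choose (k + 1) : ℂ) *
        risingFactorial a (k + 1) * risingFactorial (b + ((k + 1 : ℕ) : ℂ)) (m + 1 - (k + 1))) +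
        ((-1 : ℂ)) ^ 0 * (((m + 1).choose 0 : ℕ) : ℂ) * risingFactorial a 0 *
          risingFactorial (b + ((0 : ℕ) : ℂ)) (m + 1 - 0) =
        (b + (m : ℂ)) * risingFactorial (b - a) m := by
      have hg := (Finset.sum_range_succ' (fun j => ((-1 : ℂ)) ^ j * (m.choose j : ℂ) *
        risingFactorial a j * risingFactorial (b + (j : ℂ)) (m + 1 - j)) (m + 1)).symm
      rw [show (((m + 1).choose 0 : ℕ) : ℂ) = ((m.choose 0 : ℕ) : ℂ) by simp]
      push_cast at hg ⊢
      rw [hg, Finset.sum_range_succ]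
      rw [Nat.choose_succ_self]
      simp only [Nat.cast_zero, mul_zero, zero_mul, add_zero]
      rw [← ih a b, Finset.mul_sum]
      apply Finset.sum_congr rfl
      intro j hj
      have hjm : j ≤ m := Nat.lt_succ_iff.mp (Finset.mem_range.mp hj)
      have h1 : m + 1 - j = (m - j) + 1 := by omega
      rw [h1, rf_succ]
      have h2 : (b + (j : ℂ) + ((m - j : ℕ) : ℂ)) = b + (m : ℂ) := by
        rw [Nat.cast_sub hjm]; ring
      rw [h2]
      ring
    push_cast at e2 ⊢
    rw [add_assoc, e2, rf_succ]
    ring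

lemma rf_ne_zero_of_lt (N : ℕ) {j : ℕ} (hj : j < N) :
    risingFactorial (1 - (N : ℂ)) j ≠ 0 := by
  rw [risingFactorial]
  apply Finset.prod_ne_zero_iff.2
  intro i hi
  have hiN : i < N - 1 := by
    have := Finset.mem_range.mp hi
    omega
  have : ((1 - (N : ℤ) + i : ℤ) : ℂ) ≠ 0 := by
    rw [Int.cast_ne_zero]
    omega
  convert this using 1
  push_cast
  ring

lemma sumC (N m : ℕ) (hm : m < N) (a : ℂ) :
    ∑ j ∈ Finset.range (m + 1), ((-1 : ℂ)) ^ j * risingFactorial a j /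
        ((j.factorial : ℂ) * risingFactorial (1 - (N : ℂ)) j * ((m - j).factorial : ℂ)) =
      risingFactorial ((1 - (N : ℂ)) - a) m /
        ((m.factorial : ℂ) * risingFactorial (1 - (N : ℂ)) m) := by
  set b : ℂ := 1 - (N : ℂ) with hb
  have hden : (m.factorial : ℂ) * risingFactorial b m ≠ 0 :=
    mul_ne_zero (Nat.cast_ne_zero.2 (Nat.factorial_ne_zero m)) (rf_ne_zero_of_lt N hm)
  rw [eq_div_iff hden, Finset.sum_mul, ← chu m a b]
  apply Finset.sum_congr rfl
  intro j hj
  have hjm : j ≤ m := Nat.lt_succ_iff.mp (Finset.mem_range.mp hj)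
  have hbm : risingFactorial b m = risingFactorial b j * risingFactorial (b + j) (m - j) := by
    rw [← rf_add]
    congr 1
    omega
  have hfact : ((m.factorial : ℕ) : ℂ) = (m.choose j : ℂ) * (j.factorial : ℂ) *
      ((m - j).factorial : ℂ) := by
    push_cast [← Nat.choose_mul_factorial_mul_factorial hjm]
    ring
  have h1 : (j.factorial : ℂ) ≠ 0 := Nat.cast_ne_zero.2 (Nat.factorial_ne_zero j)
  have h2 : ((m - j).factorial : ℂ) ≠ 0 := Nat.cast_ne_zero.2 (Nat.factorial_ne_zero _)
  have h3 : risingFactorial b j ≠ 0 := rf_ne_zero_of_lt N (lt_of_le_of_lt hjm hm)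
  rw [hbm, hfact]
  field_simp

lemma physHermite_eq_map (n : ℕ) : physHermite n = (pH n).map (algebraMap ℝ ℂ) := by
  induction n with
  | zero =>
    show (1 : Polynomial ℂ) = _
    simp [show pH 0 = 1 from rfl]
  | succ n ih =>
    show Polynomial.C 2 * Polynomial.X * physHermite n -
        Polynomial.derivative (physHermite n) = _
    rw [ih, pH_succ, Polynomial.map_sub, Polynomial.map_mul, Polynomial.map_mul,
      Polynomial.map_C, Polynomial.map_X, derivative_map]
    norm_num

lemma physHermite_eval_real (n : ℕ) (x : ℝ) :
    (physHermite n).eval (x : ℂ) = (((pH n).eval x : ℝ) : ℂ) := by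
  rw [physHermite_eq_map, Polynomial.eval_map]
  have : (x : ℂ) = algebraMap ℝ ℂ x := rfl
  rw [this, Polynomial.eval₂_at_apply]
  rfl

lemma Smat_inv {N : ℕ} (α : Fin N → ℝ) (hα : ∀ k, α k ≠ 0) :
    (Smat α)⁻¹ = Matrix.diagonal (fun k => ((α k : ℂ))⁻¹) := by
  apply Matrix.inv_eq_right_inv
  rw [Smat, Matrix.diagonal_mul_diagonal]
  rw [show (fun k => (α k : ℂ) * ((α k : ℂ))⁻¹) = fun _ => (1 : ℂ) from
    funext fun k => mul_inv_cancel₀ (Complex.ofReal_ne_zero.2 (hα k))]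
  exact Matrix.diagonal_one

lemma LmatAlpha_apply {N : ℕ} (α : Fin N → ℝ) (hα : ∀ k, α k ≠ 0) (x : ℝ) (m k : Fin N) :
    LmatAlpha α x m k = if (k : ℕ) ≤ (m : ℕ) then
      (α m : ℂ) * ((α k : ℂ))⁻¹ * (((pH ((m : ℕ) - (k : ℕ))).eval x : ℝ) : ℂ) *
        (((((m : ℕ) - (k : ℕ)).factorial : ℕ) : ℂ))⁻¹ else 0 := by
  rw [LmatAlpha, Smat_inv α hα]
  rw [Matrix.mul_diagonal, Smat, Matrix.diagonal_mul, Lmat]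
  by_cases h : (k : ℕ) ≤ (m : ℕ)
  · rw [Matrix.of_apply, if_pos h, if_pos h, physHermite_eval_real]
    field_simp
  · rw [Matrix.of_apply, if_neg h, if_neg h, mul_zero, zero_mul]

lemma Wmat_apply {N : ℕ} (α δ : Fin N → ℝ) (hα : ∀ k, α k ≠ 0) (x : ℝ) (m n : Fin N) :
    Wmat α δ x m n = ∑ k : Fin N, (if (k : ℕ) ≤ (m : ℕ) ∧ (k : ℕ) ≤ (n : ℕ) then
      ((α m : ℂ) * (α n : ℂ) * ((δ k : ℂ) / ((α k : ℂ)) ^ 2) /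
        ((((((m : ℕ) - (k : ℕ)).factorial : ℕ) : ℂ)) *
        (((((n : ℕ) - (k : ℕ)).factorial : ℕ) : ℂ)))) *
        ((Real.exp (-x ^ 2) * ((pH ((m : ℕ) - (k : ℕ))).eval x *
          (pH ((n : ℕ) - (k : ℕ))).eval x) : ℝ) : ℂ) else 0) := by
  rw [Wmat, Matrix.smul_apply, Matrix.mul_apply, smul_eq_mul, Finset.mul_sum]
  apply Finset.sum_congr rfl
  intro k _
  rw [Matrix.mul_diagonal, Matrix.conjTranspose_apply, LmatAlpha_apply α hα,
    LmatAlpha_apply α hα]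
  by_cases h1 : (k : ℕ) ≤ (m : ℕ)
  · by_cases h2 : (k : ℕ) ≤ (n : ℕ)
    · rw [if_pos h1, if_pos h2, if_pos (And.intro h1 h2)]
      simp only [Complex.star_def, _root_.map_mul, map_inv₀, Complex.conj_ofReal, map_natCast]
      push_cast
      ring
    · rw [if_pos h1, if_neg h2, if_neg (show ¬((k : ℕ) ≤ (m : ℕ) ∧ (k : ℕ) ≤ (n : ℕ)) from fun h => h2 h.2)]
      simp
  · rw [if_neg h1, if_neg (show ¬((k : ℕ) ≤ (m : ℕ) ∧ (k : ℕ) ≤ (n : ℕ)) from fun h => h1 h.1)]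
    simp

/-- Corollary 3.9: the zeroth moment
`∫ W^{(α,ν)}(x) dx = diag(α_m² δ_1 2^{m-1} √π (-N-c/d)_{m-1} / ((m-1)! (1-N)_{m-1}))`,
an invertible (diagonal) matrix.  (The `Fin N` index `m` corresponds to paper index `m+1`.) -/
theorem stmt_9 (N : ℕ) (hN : 0 < N) (α : Fin N → ℝ) (hα : ∀ k, α k ≠ 0)
    (hα1 : α ⟨0, hN⟩ = 1) (δ : Fin N → ℝ) (hδ : ∀ k, 0 < δ k)
    (c d : ℝ) (hc : 0 < c) (hd : 0 < d)
    (hrel : ∀ j : ℕ, ∀ h : j + 1 < N,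
      (α ⟨j + 1, h⟩) ^ 2 / (α ⟨j, Nat.lt_of_succ_lt h⟩) ^ 2 =
        d * (j + 1) * ((N : ℝ) - (j + 1)) * δ ⟨j + 1, h⟩ /
          (2 * (d * (j + 1) + c) * δ ⟨j, Nat.lt_of_succ_lt h⟩)) :
    mInt (fun x => Wmat α δ x) =
      Matrix.diagonal (fun m : Fin N =>
        (α m : ℂ) ^ 2 * (δ ⟨0, hN⟩ : ℂ) * 2 ^ (m : ℕ) * (Real.sqrt Real.pi : ℂ) *
          risingFactorial (-(N : ℂ) - ((c / d : ℝ) : ℂ)) (m : ℕ) /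
          (((m : ℕ).factorial : ℂ) * risingFactorial (1 - (N : ℂ)) (m : ℕ))) ∧
      IsUnit (mInt (fun x => Wmat α δ x)) := by
  classical
  have hgint : ∀ a b : ℕ, Integrable (fun x : ℝ =>
      ((Real.exp (-x ^ 2) * ((pH a).eval x * (pH b).eval x) : ℝ) : ℂ)) := by
    intro a b
    have h := integrable_gauss_poly (pH a * pH b)
    simp only [Polynomial.eval_mul] at h
    exact h.ofReal
  have horthC : ∀ a b : ℕ,
      (∫ x : ℝ, ((Real.exp (-x ^ 2) * ((pH a).eval x * (pH b).eval x) : ℝ) : ℂ))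
      = ((if a = b then Real.sqrt Real.pi * 2 ^ a * a.factorial else 0 : ℝ) : ℂ) := by
    intro a b
    have h1 : (∫ x : ℝ, ((Real.exp (-x ^ 2) * ((pH a).eval x * (pH b).eval x) : ℝ) : ℂ))
        = (((∫ x : ℝ, Real.exp (-x ^ 2) * ((pH a).eval x * (pH b).eval x)) : ℝ) : ℂ) :=
      integral_ofReal
    rw [h1, gauss_pH_orth a b]
  have hdC : (d : ℂ) ≠ 0 := Complex.ofReal_ne_zero.2 (ne_of_gt hd)
  have hbeta : ∀ (t : ℕ) (ht : t < N),
      ((δ ⟨t, ht⟩ : ℝ) : ℂ) / ((α ⟨t, ht⟩ : ℝ) : ℂ) ^ 2 =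
      ((δ ⟨0, hN⟩ : ℝ) : ℂ) * 2 ^ t * risingFactorial (1 + ((c / d : ℝ) : ℂ)) t * (-1) ^ t /
        ((t.factorial : ℂ) * risingFactorial (1 - (N : ℂ)) t) := by
    intro t
    induction t with
    | zero =>
      intro ht
      have h1 : α ⟨0, ht⟩ = 1 := hα1
      simp [h1, rf_zero]
    | succ j ih =>
      intro hj
      have hjN : j < N := Nat.lt_of_succ_lt hj
      have hd1 : (0:ℝ) < d * ((j:ℝ) + 1) + c := by positivity
      have hd2 : (0:ℝ) < d * ((j:ℝ) + 1) := by positivity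
      have hNj : (0:ℝ) < (N : ℝ) - ((j:ℝ) + 1) := by
        have : ((j:ℝ) + 1) < (N : ℝ) := by exact_mod_cast hj
        linarith
      have hαj : α ⟨j, Nat.lt_of_succ_lt hj⟩ ≠ 0 := hα _
      have hαj1 : α ⟨j + 1, hj⟩ ≠ 0 := hα _
      have hδj : δ ⟨j, Nat.lt_of_succ_lt hj⟩ ≠ 0 := ne_of_gt (hδ _)
      have hδj1 : δ ⟨j + 1, hj⟩ ≠ 0 := ne_of_gt (hδ _)
      have hrelj := hrel j hj
      have hstep : δ ⟨j + 1, hj⟩ / (α ⟨j + 1, hj⟩) ^ 2 =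
          (δ ⟨j, Nat.lt_of_succ_lt hj⟩ / (α ⟨j, Nat.lt_of_succ_lt hj⟩) ^ 2) * (2 * (d * ((j:ℝ) + 1) + c)) /
            (d * ((j:ℝ) + 1) * ((N : ℝ) - ((j:ℝ) + 1))) := by
        rw [div_mul_eq_mul_div, div_div,
          div_eq_div_iff (pow_ne_zero 2 (Complex.ofReal_ne_zero.1 (by
            exact_mod_cast Complex.ofReal_ne_zero.2 hαj1)))
            (mul_ne_zero (pow_ne_zero 2 hαj) (ne_of_gt (mul_pos hd2 hNj)))]
        field_simp at hrelj
        linear_combination -hrelj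
      have hstepC : ((δ ⟨j + 1, hj⟩ : ℝ) : ℂ) / ((α ⟨j + 1, hj⟩ : ℝ) : ℂ) ^ 2 =
          (((δ ⟨j, Nat.lt_of_succ_lt hj⟩ : ℝ) : ℂ) / ((α ⟨j, Nat.lt_of_succ_lt hj⟩ : ℝ) : ℂ) ^ 2) *
            (2 * ((d:ℂ) * ((j:ℂ) + 1) + (c:ℂ))) /
            ((d:ℂ) * ((j:ℂ) + 1) * ((N : ℂ) - ((j:ℂ) + 1))) := by
        exact_mod_cast congrArg (fun r : ℝ => (r : ℂ)) hstep
      rw [hstepC, ih (Nat.lt_of_succ_lt hj)]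
      rw [rf_succ, rf_succ, Nat.factorial_succ]
      have hj1 : ((j:ℂ) + 1) ≠ 0 := by
        have : ((j + 1 : ℕ) : ℂ) ≠ 0 := Nat.cast_ne_zero.2 (Nat.succ_ne_zero j)
        push_cast at this
        exact this
      have hNjC : ((N : ℂ) - ((j:ℂ) + 1)) ≠ 0 := by
        have : ((N : ℝ) - ((j:ℝ) + 1)) ≠ 0 := ne_of_gt hNj
        exact_mod_cast Complex.ofReal_ne_zero.2 this
      have hbj : ((1 : ℂ) - N + j) ≠ 0 := by
        have : ((1 - (N:ℤ) + j : ℤ) : ℂ) ≠ 0 := by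
          rw [Int.cast_ne_zero]; omega
        convert this using 1
        push_cast
        ring
      have hrfj : risingFactorial (1 - (N : ℂ)) j ≠ 0 := rf_ne_zero_of_lt N hjN
      have hfj : ((j.factorial : ℕ) : ℂ) ≠ 0 := Nat.cast_ne_zero.2 (Nat.factorial_ne_zero j)
      push_cast
      field_simp
      ring
  have hαC : ∀ k : Fin N, ((α k : ℝ) : ℂ) ≠ 0 := fun k => Complex.ofReal_ne_zero.2 (hα k)
  have hmain : mInt (fun x => Wmat α δ x) =
      Matrix.diagonal (fun m : Fin N =>
        (α m : ℂ) ^ 2 * (δ ⟨0, hN⟩ : ℂ) * 2 ^ (m : ℕ) * (Real.sqrt Real.pi : ℂ) *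
          risingFactorial (-(N : ℂ) - ((c / d : ℝ) : ℂ)) (m : ℕ) /
          (((m : ℕ).factorial : ℂ) * risingFactorial (1 - (N : ℂ)) (m : ℕ))) := by
    ext i j
    rw [mInt, Matrix.of_apply]
    simp only [Wmat_apply α δ hα]
    rw [MeasureTheory.integral_finset_sum]
    swap
    · intro k _
      split_ifs
      · exact (hgint _ _).const_mul _
      · exact integrable_zero _ _ _
    have hterm : ∀ k : Fin N,
        (∫ x : ℝ, (if (k : ℕ) ≤ (i : ℕ) ∧ (k : ℕ) ≤ (j : ℕ) then
          ((α i : ℂ) * (α j : ℂ) * ((δ k : ℂ) / ((α k : ℂ)) ^ 2) /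
            ((((((i : ℕ) - (k : ℕ)).factorial : ℕ) : ℂ)) *
            (((((j : ℕ) - (k : ℕ)).factorial : ℕ) : ℂ)))) *
            ((Real.exp (-x ^ 2) * ((pH ((i : ℕ) - (k : ℕ))).eval x *
              (pH ((j : ℕ) - (k : ℕ))).eval x) : ℝ) : ℂ) else 0))
        = (if (k : ℕ) ≤ (i : ℕ) ∧ (k : ℕ) ≤ (j : ℕ) then
          ((α i : ℂ) * (α j : ℂ) * ((δ k : ℂ) / ((α k : ℂ)) ^ 2) /
            ((((((i : ℕ) - (k : ℕ)).factorial : ℕ) : ℂ)) *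
            (((((j : ℕ) - (k : ℕ)).factorial : ℕ) : ℂ)))) *
            ((if (i : ℕ) - (k : ℕ) = (j : ℕ) - (k : ℕ) then
              Real.sqrt Real.pi * 2 ^ ((i : ℕ) - (k : ℕ)) *
                ((i : ℕ) - (k : ℕ)).factorial else 0 : ℝ) : ℂ) else 0) := by
      intro k
      by_cases h : (k : ℕ) ≤ (i : ℕ) ∧ (k : ℕ) ≤ (j : ℕ)
      · simp only [if_pos h]
        rw [MeasureTheory.integral_const_mul, horthC]
      · simp only [if_neg h, integral_zero]
    rw [Finset.sum_congr rfl (fun k _ => hterm k)]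
    by_cases hij : i = j
    · subst hij
      rw [Matrix.diagonal_apply_eq]
      have hA : ∀ k ∈ (Finset.univ : Finset (Fin N)),
          (if (k : ℕ) ≤ (i : ℕ) ∧ (k : ℕ) ≤ (i : ℕ) then
          ((α i : ℂ) * (α i : ℂ) * ((δ k : ℂ) / ((α k : ℂ)) ^ 2) /
            ((((((i : ℕ) - (k : ℕ)).factorial : ℕ) : ℂ)) *
            (((((i : ℕ) - (k : ℕ)).factorial : ℕ) : ℂ)))) *
            ((if (i : ℕ) - (k : ℕ) = (i : ℕ) - (k : ℕ) then
              Real.sqrt Real.pi * 2 ^ ((i : ℕ) - (k : ℕ)) *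
                ((i : ℕ) - (k : ℕ)).factorial else 0 : ℝ) : ℂ) else 0)
          = (if (k : ℕ) ≤ (i : ℕ) then
              ((α i : ℂ) ^ 2 * (δ ⟨0, hN⟩ : ℂ) * 2 ^ (i : ℕ) * (Real.sqrt Real.pi : ℂ)) *
              ((-1) ^ (k : ℕ) * risingFactorial (1 + ((c / d : ℝ) : ℂ)) (k : ℕ) /
                (((k : ℕ).factorial : ℂ) * risingFactorial (1 - (N : ℂ)) (k : ℕ) *
                  ((((i : ℕ) - (k : ℕ)).factorial : ℕ) : ℂ))) else 0) := by
        intro k _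
        by_cases hk : (k : ℕ) ≤ (i : ℕ)
        · rw [if_pos ⟨hk, hk⟩, if_pos rfl, if_pos hk]
          have hb := hbeta (k : ℕ) k.isLt
          simp only [Fin.eta] at hb
          have h2 : (2 : ℂ) ^ (i : ℕ) = 2 ^ (k : ℕ) * 2 ^ ((i : ℕ) - (k : ℕ)) := by
            rw [← pow_add]
            congr 1
            omega
          rw [hb, h2]
          have hfik : ((((i : ℕ) - (k : ℕ)).factorial : ℕ) : ℂ) ≠ 0 :=
            Nat.cast_ne_zero.2 (Nat.factorial_ne_zero _)
          have hfk : (((k : ℕ).factorial : ℂ)) ≠ 0 :=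
            Nat.cast_ne_zero.2 (Nat.factorial_ne_zero _)
          have hrfk : risingFactorial (1 - (N : ℂ)) (k : ℕ) ≠ 0 :=
            rf_ne_zero_of_lt N k.isLt
          push_cast
          field_simp
        · rw [if_neg (show ¬((k : ℕ) ≤ (i : ℕ) ∧ (k : ℕ) ≤ (i : ℕ)) from fun h => hk h.1),
            if_neg hk]
      rw [Finset.sum_congr rfl hA]
      rw [Fin.sum_univ_eq_sum_range (fun t => if t ≤ (i : ℕ) then
          ((α i : ℂ) ^ 2 * (δ ⟨0, hN⟩ : ℂ) * 2 ^ (i : ℕ) * (Real.sqrt Real.pi : ℂ)) *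
          ((-1) ^ t * risingFactorial (1 + ((c / d : ℝ) : ℂ)) t /
            ((t.factorial : ℂ) * risingFactorial (1 - (N : ℂ)) t *
              (((i : ℕ) - t).factorial : ℂ))) else 0) N]
      rw [← Finset.sum_subset (Finset.range_subset_range.2 (Nat.succ_le_of_lt i.isLt))
        (fun x _ hnx => if_neg (fun hc => hnx (Finset.mem_range.2 (Nat.lt_succ_of_le hc))))]
      rw [Finset.sum_congr rfl (fun t ht =>
        if_pos (Nat.lt_succ_iff.mp (Finset.mem_range.mp ht)))]
      rw [← Finset.mul_sum, sumC N (i : ℕ) i.isLt (1 + ((c / d : ℝ) : ℂ))]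
      rw [show (1 - (N : ℂ)) - (1 + ((c / d : ℝ) : ℂ)) = -(N : ℂ) - ((c / d : ℝ) : ℂ) by ring]
      ring
    · rw [Matrix.diagonal_apply_ne _ hij]
      apply Finset.sum_eq_zero
      intro k _
      by_cases h : (k : ℕ) ≤ (i : ℕ) ∧ (k : ℕ) ≤ (j : ℕ)
      · rw [if_pos h]
        have hne : ¬((i : ℕ) - (k : ℕ) = (j : ℕ) - (k : ℕ)) := by
          have : (i : ℕ) ≠ (j : ℕ) := fun hc => hij (Fin.ext hc)
          omega
        rw [if_neg hne, Complex.ofReal_zero, mul_zero]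
      · rw [if_neg h]
  refine ⟨hmain, ?_⟩
  rw [hmain]
  rw [Matrix.isUnit_iff_isUnit_det, Matrix.det_diagonal]
  rw [isUnit_iff_ne_zero]
  apply Finset.prod_ne_zero_iff.2
  intro m _
  apply div_ne_zero
  · apply mul_ne_zero
    apply mul_ne_zero
    apply mul_ne_zero
    apply mul_ne_zero
    · exact pow_ne_zero 2 (hαC m)
    · exact Complex.ofReal_ne_zero.2 (ne_of_gt (hδ _))
    · exact pow_ne_zero _ two_ne_zero
    · exact Complex.ofReal_ne_zero.2
        (ne_of_gt (Real.sqrt_pos.2 Real.pi_pos))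
    · rw [risingFactorial]
      apply Finset.prod_ne_zero_iff.2
      intro t ht
      have htm : t < (m : ℕ) := Finset.mem_range.mp ht
      have htN : (t : ℝ) < (N : ℝ) := by
        have : t < N := lt_trans htm m.isLt
        exact_mod_cast this
      have hlt : (t : ℝ) - (N : ℝ) - c / d < 0 := by
        have : 0 < c / d := div_pos hc hd
        linarith
      have : (((t : ℝ) - (N : ℝ) - c / d : ℝ) : ℂ) ≠ 0 :=
        Complex.ofReal_ne_zero.2 (ne_of_lt hlt)
      convert this using 1
      push_cast
      ring
  · exact mul_ne_zero (Nat.cast_ne_zero.2 (Nat.factorial_ne_zero _))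
      (rf_ne_zero_of_lt N m.isLt)
end

section
/- For all Mat_N(ℂ)-valued polynomials P and Q one has the adjoint relation ∫_ℝ P'(x) W^{(α,ν+1)}(x) (Q(x))^* dx = − ∫_ℝ P(x) W^{(α,ν)}(x) ( Q'(x) (Φ^{(α,ν)}(x))^* + Q(x) (Ψ^{(α,ν)}(x))^* )^* dx. -/
open Polynomial Matrix MeasureTheory

section Aux
open Filter Real

noncomputable def gss (x : ℝ) : ℂ := (Real.exp (-x ^ 2) : ℂ)



lemma pg_bound (p : Polynomial ℂ) : ∃ C : ℝ, ∀ x : ℝ,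
    ‖p.eval (x : ℂ) * gss x‖ ≤ C * Real.exp (-(1/2) * x ^ 2) := by
  refine ⟨(∑ i ∈ Finset.range (p.natDegree + 1), ‖p.coeff i‖ * i.factorial) * Real.exp (1/2),
    fun x => ?_⟩
  have hx2 : Real.exp |x| * Real.exp (-x ^ 2) ≤ Real.exp (1/2) * Real.exp (-(1/2) * x ^ 2) := by
    rw [← Real.exp_add, ← Real.exp_add, Real.exp_le_exp]
    nlinarith [abs_nonneg x, sq_abs x, sq_nonneg (|x| - 1)]
  have heval : ‖p.eval (x : ℂ)‖ ≤
      (∑ i ∈ Finset.range (p.natDegree + 1), ‖p.coeff i‖ * i.factorial) * Real.exp |x| := by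
    rw [Polynomial.eval_eq_sum_range, Finset.sum_mul]
    refine (norm_sum_le _ _).trans (Finset.sum_le_sum fun i _ => ?_)
    rw [norm_mul, norm_pow, mul_assoc]
    refine mul_le_mul_of_nonneg_left ?_ (norm_nonneg _)
    have : ‖(x : ℂ)‖ ^ i ≤ i.factorial * Real.exp |x| := by
      rw [Complex.norm_real, Real.norm_eq_abs]
      have := Real.pow_div_factorial_le_exp (x := |x|) (abs_nonneg x) i
      rw [div_le_iff₀ (by positivity)] at this
      linarith [this]
    exact this
  calc ‖p.eval (x : ℂ) * gss x‖ = ‖p.eval (x : ℂ)‖ * Real.exp (-x ^ 2) := by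
        rw [norm_mul, gss, Complex.norm_real, Real.norm_eq_abs, abs_of_pos (Real.exp_pos _)]
    _ ≤ ((∑ i ∈ Finset.range (p.natDegree + 1), ‖p.coeff i‖ * i.factorial) * Real.exp |x|) *
        Real.exp (-x ^ 2) := by
        refine mul_le_mul_of_nonneg_right heval (le_of_lt (Real.exp_pos _))
    _ ≤ _ := by
        rw [mul_assoc, mul_assoc]
        refine mul_le_mul_of_nonneg_left hx2 ?_
        positivity

lemma pg_cont (p : Polynomial ℂ) : Continuous fun x : ℝ => p.eval (x : ℂ) * gss x := by
  apply Continuous.mul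
  · exact (Polynomial.continuous p).comp Complex.continuous_ofReal
  · exact Complex.continuous_ofReal.comp (Real.continuous_exp.comp ((continuous_pow 2).neg))

lemma pg_integrable (p : Polynomial ℂ) : Integrable fun x : ℝ => p.eval (x : ℂ) * gss x := by
  obtain ⟨C, hC⟩ := pg_bound p
  exact Integrable.mono' ((integrable_exp_neg_mul_sq (by norm_num : (0:ℝ) < 1/2)).const_mul C)
    (pg_cont p).aestronglyMeasurable (Filter.Eventually.of_forall hC)

lemma pg_tendsto_aux (l : Filter ℝ) (hsq : Tendsto (fun x : ℝ => x ^ 2) l atTop)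
    (p : Polynomial ℂ) :
    Tendsto (fun x : ℝ => p.eval (x : ℂ) * gss x) l (nhds 0) := by
  obtain ⟨C, hC⟩ := pg_bound p
  apply squeeze_zero_norm hC
  rw [show (0:ℝ) = C * 0 by ring]
  refine Tendsto.const_mul C (Real.tendsto_exp_atBot.comp ?_)
  exact (Filter.tendsto_const_mul_atBot_of_neg (by norm_num : -(1/2:ℝ) < 0)).mpr hsq

lemma pg_tendsto_top (p : Polynomial ℂ) :
    Tendsto (fun x : ℝ => p.eval (x : ℂ) * gss x) atTop (nhds 0) :=
  pg_tendsto_aux atTop (tendsto_pow_atTop (by norm_num)) p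

lemma pg_tendsto_bot (p : Polynomial ℂ) :
    Tendsto (fun x : ℝ => p.eval (x : ℂ) * gss x) atBot (nhds 0) := by
  refine pg_tendsto_aux atBot ?_ p
  have h1 : Tendsto (fun x : ℝ => |x|) atBot atTop := tendsto_abs_atBot_atTop
  have h2 : Tendsto (fun y : ℝ => y ^ 2) atTop atTop := tendsto_pow_atTop two_ne_zero
  have h := h2.comp h1
  simpa [Function.comp_def, sq_abs] using h

lemma pg_hasDerivAt (p : Polynomial ℂ) (x : ℝ) :
    HasDerivAt (fun y : ℝ => p.eval (y : ℂ) * gss y)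
      ((derivative p - C 2 * X * p).eval (x : ℂ) * gss x) x := by
  have h1 : HasDerivAt (fun y : ℝ => p.eval (y : ℂ)) (p.derivative.eval (x : ℂ)) x :=
    (p.hasDerivAt (x : ℂ)).comp_ofReal
  have h2 : HasDerivAt (fun y : ℝ => gss y) ((-2 * x : ℝ) * gss x) x := by
    have h3 : HasDerivAt (fun y : ℝ => Real.exp (-y ^ 2)) ((-2 * x) * Real.exp (-x ^ 2)) x := by
      have h4 : HasDerivAt (fun y : ℝ => -y ^ 2) (-2 * x) x := by
        simpa using (hasDerivAt_pow 2 x).fun_neg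
      simpa [mul_comm] using h4.exp
    simpa [gss, Complex.ofReal_mul] using h3.ofReal_comp
  have := h1.fun_mul h2
  refine this.congr_deriv ?_
  simp only [Polynomial.eval_sub, Polynomial.eval_mul, Polynomial.eval_C, Polynomial.eval_X]
  push_cast
  ring

lemma pg_integral_deriv_zero (p : Polynomial ℂ) (g : ℝ → ℂ)
    (hg : ∀ x : ℝ, g x = (derivative p - C 2 * X * p).eval (x : ℂ) * gss x) :
    ∫ x : ℝ, g x = 0 := by
  have : ∫ x : ℝ, g x = 0 - 0 := by
    refine integral_of_hasDerivAt_of_tendsto (f := fun y : ℝ => p.eval (y : ℂ) * gss y)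
      (fun x => by rw [hg]; exact pg_hasDerivAt p x) ?_ (pg_tendsto_bot p) (pg_tendsto_top p)
    exact (pg_integrable _).congr (Filter.Eventually.of_forall fun x => (hg x).symm)
  simpa using this


/-- entry polynomial of a matrix polynomial -/
noncomputable def entryPoly {N : ℕ} (P : Polynomial (Matrix (Fin N) (Fin N) ℂ)) (i j : Fin N) :
    Polynomial ℂ :=
  ⟨.ofCoeff (P.toFinsupp.coeff.mapRange (fun M => M i j) rfl)⟩

lemma entryPoly_coeff {N : ℕ} (P : Polynomial (Matrix (Fin N) (Fin N) ℂ)) (i j : Fin N) (k : ℕ) :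
    (entryPoly P i j).coeff k = P.coeff k i j := by
  rcases P with ⟨f⟩
  simp [entryPoly, Polynomial.coeff, Finsupp.mapRange_apply]
  exact Finsupp.mapRange_apply ..

lemma entryPoly_natDegree_le {N : ℕ} (P : Polynomial (Matrix (Fin N) (Fin N) ℂ)) (i j : Fin N) :
    (entryPoly P i j).natDegree ≤ P.natDegree := by
  refine Polynomial.natDegree_le_iff_coeff_eq_zero.mpr fun m hm => ?_
  rw [entryPoly_coeff, Polynomial.coeff_eq_zero_of_natDegree_lt hm]
  rfl

lemma evalM_entry {N : ℕ} (P : Polynomial (Matrix (Fin N) (Fin N) ℂ)) (x : ℝ) (i j : Fin N) :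
    evalM P x i j = (entryPoly P i j).eval (x : ℂ) := by
  rw [evalM, Polynomial.eval_eq_sum_range' (Nat.lt_succ_self P.natDegree),
    Polynomial.eval_eq_sum_range' (Nat.lt_succ_of_le (entryPoly_natDegree_le P i j))]
  rw [Matrix.sum_apply]
  refine Finset.sum_congr rfl fun k _ => ?_
  rw [_root_.smul_pow, one_pow, mul_smul_comm, mul_one, Matrix.smul_apply, smul_eq_mul,
    entryPoly_coeff, mul_comm]

lemma entryPoly_derivative {N : ℕ} (P : Polynomial (Matrix (Fin N) (Fin N) ℂ)) (i j : Fin N) :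
    entryPoly (Polynomial.derivative P) i j = Polynomial.derivative (entryPoly P i j) := by
  ext k
  rw [entryPoly_coeff, Polynomial.coeff_derivative, Polynomial.coeff_derivative, entryPoly_coeff]
  have : ((k : Matrix (Fin N) (Fin N) ℂ) + 1) = ((k : ℂ) + 1) • (1 : Matrix (Fin N) (Fin N) ℂ) := by
    push_cast
    rw [Matrix.smul_one_eq_diagonal, ← Matrix.diagonal_natCast, ← Matrix.diagonal_one,
      ← Matrix.diagonal_add]
  rw [this, mul_smul_comm, mul_one, Matrix.smul_apply, smul_eq_mul, mul_comm]

lemma evalM_hasDerivAt {N : ℕ} (P : Polynomial (Matrix (Fin N) (Fin N) ℂ)) (x : ℝ) (i j : Fin N) :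
    HasDerivAt (fun y : ℝ => evalM P y i j) (evalM (Polynomial.derivative P) x i j) x := by
  have h := ((entryPoly P i j).hasDerivAt (x : ℂ)).comp_ofReal
  have he : (fun y : ℝ => evalM P y i j) = fun y : ℝ => (entryPoly P i j).eval (y : ℂ) :=
    funext fun y => evalM_entry P y i j
  rw [he, evalM_entry, entryPoly_derivative]
  exact h

/-- polynomial functions of a real variable with values in ℂ -/
def IsPF (f : ℝ → ℂ) : Prop := ∃ p : Polynomial ℂ, ∀ x : ℝ, f x = p.eval (x : ℂ)

lemma IsPF.congr {f g : ℝ → ℂ} (h : ∀ x, f x = g x) (hg : IsPF g) : IsPF f :=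
  ⟨hg.choose, fun x => (h x).trans (hg.choose_spec x)⟩

lemma IsPF.const (c : ℂ) : IsPF fun _ => c := ⟨Polynomial.C c, by simp⟩

lemma IsPF.mul {f g : ℝ → ℂ} (hf : IsPF f) (hg : IsPF g) : IsPF fun x => f x * g x := by
  obtain ⟨p, hp⟩ := hf; obtain ⟨q, hq⟩ := hg
  exact ⟨p * q, fun x => by simp [hp, hq]⟩

lemma IsPF.sum {ι : Type*} {s : Finset ι} {f : ι → ℝ → ℂ} (h : ∀ i ∈ s, IsPF (f i)) :
    IsPF fun x => ∑ i ∈ s, f i x := by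
  classical
  induction s using Finset.induction_on with
  | empty => exact ⟨0, by simp⟩
  | @insert a s' hne ih =>
    obtain ⟨p, hp⟩ := h a (Finset.mem_insert_self a s')
    obtain ⟨q, hq⟩ := ih fun i hi => h i (Finset.mem_insert_of_mem hi)
    exact ⟨p + q, fun x => by simp [Finset.sum_insert hne, hp, hq]⟩

lemma IsPF.conj {f : ℝ → ℂ} (hf : IsPF f) : IsPF fun x => (starRingEnd ℂ) (f x) := by
  obtain ⟨p, hp⟩ := hf
  refine ⟨p.map (starRingEnd ℂ), fun x => ?_⟩
  show (starRingEnd ℂ) (f x) = _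
  rw [hp x, Polynomial.eval_map, ← Complex.conj_ofReal x, Polynomial.eval₂_hom,
    Complex.conj_ofReal]

lemma isPF_Lmat (N : ℕ) (i j : Fin N) : IsPF fun x : ℝ => Lmat N (x : ℂ) i j := by
  by_cases h : (j : ℕ) ≤ (i : ℕ)
  · refine ⟨Polynomial.C ((Nat.factorial ((i : ℕ) - (j : ℕ)) : ℂ))⁻¹ *
      physHermite ((i : ℕ) - (j : ℕ)), fun x => ?_⟩
    simp only [Lmat, Matrix.of_apply, if_pos h, Polynomial.eval_mul, Polynomial.eval_C]
    ring
  · refine ⟨0, fun x => ?_⟩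
    simp only [Lmat, Matrix.of_apply, if_neg h, Polynomial.eval_zero]

lemma isPF_LmatAlpha {N : ℕ} (α : Fin N → ℝ) (i j : Fin N) :
    IsPF fun x : ℝ => LmatAlpha α x i j := by
  have he : ∀ x : ℝ, LmatAlpha α x i j =
      ∑ b : Fin N, ((α i : ℂ) * Lmat N (x : ℂ) i b) * ((Smat α)⁻¹ b j) := by
    intro x
    rw [LmatAlpha, Matrix.mul_apply]
    refine Finset.sum_congr rfl fun b _ => ?_
    rw [Smat, Matrix.diagonal_mul]
  refine IsPF.congr he (IsPF.sum fun b _ => ?_)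
  exact ((IsPF.const _).mul (isPF_Lmat N i b)).mul (IsPF.const _)


lemma isPF_V {N : ℕ} (α : Fin N → ℝ) (δv : Fin N → ℝ) (i j : Fin N) :
    IsPF fun x : ℝ =>
      (LmatAlpha α x * Matrix.diagonal (fun k => (δv k : ℂ)) * (LmatAlpha α x)ᴴ) i j := by
  refine IsPF.congr (g := fun x => ∑ b : Fin N,
      (LmatAlpha α x i b * (δv b : ℂ)) * (starRingEnd ℂ) (LmatAlpha α x j b)) (fun x => ?_) ?_
  · rw [Matrix.mul_apply]
    refine Finset.sum_congr rfl fun b _ => ?_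
    rw [Matrix.mul_diagonal, Matrix.conjTranspose_apply]
    rfl
  · exact IsPF.sum fun b _ =>
      ((isPF_LmatAlpha α i b).mul (IsPF.const _)).mul (IsPF.conj (isPF_LmatAlpha α j b))

lemma Wmat_apply_s10 {N : ℕ} (α : Fin N → ℝ) (δv : Fin N → ℝ) (x : ℝ) (i j : Fin N) :
    Wmat α δv x i j = gss x *
      (LmatAlpha α x * Matrix.diagonal (fun k => (δv k : ℂ)) * (LmatAlpha α x)ᴴ) i j := by
  rw [Wmat, Matrix.smul_apply, smul_eq_mul]; rfl

lemma det_LmatAlpha {N : ℕ} (α : Fin N → ℝ) (hα : ∀ k, α k ≠ 0) (x : ℝ) :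
    (LmatAlpha α x).det = 1 := by
  have hL : (Lmat N (x : ℂ)).det = 1 := by
    have hbt : (Lmat N (x : ℂ)).BlockTriangular OrderDual.toDual := by
      intro i j hij
      have : (i : ℕ) < (j : ℕ) := hij
      simp only [Lmat, Matrix.of_apply, if_neg (by omega : ¬ (j : ℕ) ≤ (i : ℕ))]
    rw [Matrix.det_of_lowerTriangular _ hbt]
    refine Finset.prod_eq_one fun i _ => ?_
    simp [Lmat, physHermite]
  have hS : (Smat α).det = ∏ k, (α k : ℂ) := by rw [Smat, Matrix.det_diagonal]
  have hSne : (Smat α).det ≠ 0 := by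
    rw [hS]
    exact Finset.prod_ne_zero_iff.mpr fun k _ => by
      simpa using hα k
  rw [LmatAlpha, Matrix.det_mul, Matrix.det_mul, hL, mul_one, Matrix.det_nonsing_inv,
    Ring.inverse_eq_inv']
  exact mul_inv_cancel₀ hSne

lemma isUnit_det_Wmat {N : ℕ} (α : Fin N → ℝ) (hα : ∀ k, α k ≠ 0) (δv : Fin N → ℝ)
    (hδv : ∀ k, δv k ≠ 0) (x : ℝ) : IsUnit (Wmat α δv x).det := by
  rw [Wmat, Matrix.det_smul, Matrix.det_mul, Matrix.det_mul, det_LmatAlpha α hα,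
    Matrix.det_conjTranspose, det_LmatAlpha α hα, Matrix.det_diagonal]
  refine isUnit_iff_ne_zero.mpr (mul_ne_zero (pow_ne_zero _ ?_) ?_)
  · exact_mod_cast Real.exp_ne_zero _
  · rw [one_mul, star_one, mul_one]
    exact Finset.prod_ne_zero_iff.mpr fun k _ => by simpa using hδv k

noncomputable def dWmat {N : ℕ} (α δ' : Fin N → ℝ) (x : ℝ) : Matrix (Fin N) (Fin N) ℂ :=
  Matrix.of fun i j => deriv (fun y : ℝ => Wmat α δ' y i j) x

lemma eval_map_conj (p : Polynomial ℂ) (x : ℝ) :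
    (p.map (starRingEnd ℂ)).eval (x : ℂ) = star (p.eval (x : ℂ)) := by
  rw [Polynomial.eval_map, ← Complex.conj_ofReal x, Polynomial.eval₂_hom, Complex.conj_ofReal]
  rfl

end Aux

/-- Proposition 3.10(i): the shift operator
`(Q S^{(α,ν)})(x) = Q'(x)(Φ^{(α,ν)}(x))^* + Q(x)(Ψ^{(α,ν)}(x))^*` satisfies
`⟨P', Q⟩^{(ν+1)} = -⟨P, Q S^{(α,ν)}⟩^{(ν)}` for all matrix-valued polynomials `P, Q`,
where `Φ^{(α,ν)}(x) = (W^{(α,ν)}(x))⁻¹ W^{(α,ν+1)}(x)` and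
`Ψ^{(α,ν)}(x) = (W^{(α,ν)}(x))⁻¹ (dW^{(α,ν+1)}/dx)(x)`. -/
theorem stmt_10 (N : ℕ) (hN : 0 < N) (α : Fin N → ℝ) (hα : ∀ k, α k ≠ 0)
    (hα1 : α ⟨0, hN⟩ = 1) (δ : Fin N → ℝ) (hδ : ∀ k, 0 < δ k)
    (c d : ℝ) (hc : 0 < c) (hd : 0 < d)
    (hrel : ∀ j : ℕ, ∀ h : j + 1 < N,
      (α ⟨j + 1, h⟩) ^ 2 / (α ⟨j, Nat.lt_of_succ_lt h⟩) ^ 2 =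
        d * (j + 1) * ((N : ℝ) - (j + 1)) * δ ⟨j + 1, h⟩ /
          (2 * (d * (j + 1) + c) * δ ⟨j, Nat.lt_of_succ_lt h⟩))
    (δ' : Fin N → ℝ) (hδ' : ∀ i : Fin N, δ' i = (d * ((i : ℕ) + 1) + c) * δ i)
    (Φ Ψ : ℝ → Matrix (Fin N) (Fin N) ℂ)
    (hΦ : ∀ x : ℝ, Φ x = (Wmat α δ x)⁻¹ * Wmat α δ' x)
    (hΨ : ∀ x : ℝ, Ψ x = (Wmat α δ x)⁻¹ *
      Matrix.of (fun i j => deriv (fun y : ℝ => Wmat α δ' y i j) x)) :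
    ∀ P Q : Polynomial (Matrix (Fin N) (Fin N) ℂ),
      mInt (fun x => evalM (Polynomial.derivative P) x * Wmat α δ' x * (evalM Q x)ᴴ) =
        -mInt (fun x => evalM P x * Wmat α δ x *
          (evalM (Polynomial.derivative Q) x * (Φ x)ᴴ + evalM Q x * (Ψ x)ᴴ)ᴴ) := by
  intro P Q
  -- polynomial witnesses for the entries of `L^α Δ' (L^α)ᴴ`
  obtain ⟨w, hw⟩ : ∃ w : Fin N → Fin N → Polynomial ℂ, ∀ a b (x : ℝ),
      (LmatAlpha α x * Matrix.diagonal (fun k => (δ' k : ℂ)) * (LmatAlpha α x)ᴴ) a b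
        = (w a b).eval (x : ℂ) := by
    have h := fun a b : Fin N => isPF_V α δ' a b
    choose w hw using h
    exact ⟨w, fun a b x => hw a b x⟩
  have hWent : ∀ a b (x : ℝ), Wmat α δ' x a b = (w a b).eval (x : ℂ) * gss x := by
    intro a b x
    rw [Wmat_apply_s10, hw, mul_comm]
  have hWder : ∀ a b (x : ℝ), HasDerivAt (fun y : ℝ => Wmat α δ' y a b)
      ((Polynomial.derivative (w a b) - Polynomial.C 2 * Polynomial.X * w a b).eval (x : ℂ)
        * gss x) x := by
    intro a b x
    have h := pg_hasDerivAt (w a b) x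
    have hfun : (fun y : ℝ => (w a b).eval (y : ℂ) * gss y) = fun y : ℝ => Wmat α δ' y a b :=
      funext fun y => (hWent a b y).symm
    rwa [hfun] at h
  have hdW : ∀ a b (x : ℝ), dWmat α δ' x a b =
      (Polynomial.derivative (w a b) - Polynomial.C 2 * Polynomial.X * w a b).eval (x : ℂ)
        * gss x := fun a b x => (hWder a b x).deriv
  -- invertibility
  have hU : ∀ x : ℝ, IsUnit (Wmat α δ x).det :=
    fun x => isUnit_det_Wmat α hα δ (fun k => (hδ k).ne') x
  have hcancel : ∀ (x : ℝ) (M : Matrix (Fin N) (Fin N) ℂ),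
      Wmat α δ x * ((Wmat α δ x)⁻¹ * M) = M := by
    intro x M
    rw [← Matrix.mul_assoc, Matrix.mul_nonsing_inv _ (hU x), Matrix.one_mul]
  -- the right-hand side integrand simplifies
  have hF2 : ∀ x : ℝ, evalM P x * Wmat α δ x *
      (evalM (Polynomial.derivative Q) x * (Φ x)ᴴ + evalM Q x * (Ψ x)ᴴ)ᴴ
      = evalM P x * Wmat α δ' x * (evalM (Polynomial.derivative Q) x)ᴴ
        + evalM P x * dWmat α δ' x * (evalM Q x)ᴴ := by
    intro x
    have hΨ' : Ψ x = (Wmat α δ x)⁻¹ * dWmat α δ' x := hΨ x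
    rw [hΦ x, hΨ']
    simp only [Matrix.conjTranspose_add, Matrix.conjTranspose_mul,
      Matrix.conjTranspose_conjTranspose, Matrix.mul_add, Matrix.mul_assoc]
    rw [hcancel x, hcancel x]
  -- entrywise expansion of `A * B * Cᴴ`
  have hexp : ∀ (A B Cm : Matrix (Fin N) (Fin N) ℂ) (i j : Fin N),
      (A * B * Cmᴴ) i j = ∑ b : Fin N, ∑ a : Fin N, A i a * (B a b * star (Cm j b)) := by
    intro A B Cm i j
    simp only [Matrix.mul_apply, Matrix.conjTranspose_apply, Finset.sum_mul, mul_assoc]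
  -- representation of `evalM R * W' * (evalM S)ᴴ` entries as polynomial × gaussian
  have hrep : ∀ (R S : Polynomial (Matrix (Fin N) (Fin N) ℂ)) (i j : Fin N),
      ∃ p : Polynomial ℂ, ∀ x : ℝ,
        (evalM R x * Wmat α δ' x * (evalM S x)ᴴ) i j = p.eval (x : ℂ) * gss x := by
    intro R S i j
    refine ⟨∑ b : Fin N, ∑ a : Fin N, entryPoly R i a *
      (w a b * (entryPoly S j b).map (starRingEnd ℂ)), fun x => ?_⟩
    rw [hexp, Polynomial.eval_finset_sum, Finset.sum_mul]
    refine Finset.sum_congr rfl fun b _ => ?_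
    rw [Polynomial.eval_finset_sum, Finset.sum_mul]
    refine Finset.sum_congr rfl fun a _ => ?_
    rw [Polynomial.eval_mul, Polynomial.eval_mul, eval_map_conj, ← evalM_entry, ← evalM_entry,
      hWent a b x]
    ring
  -- entrywise derivative of `evalM P * W' * (evalM Q)ᴴ`
  have hGder : ∀ (i j : Fin N) (x : ℝ),
      HasDerivAt (fun y : ℝ => (evalM P y * Wmat α δ' y * (evalM Q y)ᴴ) i j)
        ((evalM (Polynomial.derivative P) x * Wmat α δ' x * (evalM Q x)ᴴ
          + (evalM P x * Wmat α δ' x * (evalM (Polynomial.derivative Q) x)ᴴ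
            + evalM P x * dWmat α δ' x * (evalM Q x)ᴴ)) i j) x := by
    intro i j x
    have key : HasDerivAt (fun y : ℝ => ∑ b : Fin N, ∑ a : Fin N,
        evalM P y i a * (Wmat α δ' y a b * star (evalM Q y j b)))
        (∑ b : Fin N, ∑ a : Fin N,
          (evalM (Polynomial.derivative P) x i a * (Wmat α δ' x a b * star (evalM Q x j b))
            + evalM P x i a * (dWmat α δ' x a b * star (evalM Q x j b)
              + Wmat α δ' x a b * star (evalM (Polynomial.derivative Q) x j b)))) x := by
      refine HasDerivAt.fun_sum fun b _ => HasDerivAt.fun_sum fun a _ => ?_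
      rw [hdW a b x]
      exact (evalM_hasDerivAt P x i a).mul
        ((hWder a b x).mul ((evalM_hasDerivAt Q x j b).star))
    have hfun : (fun y : ℝ => ∑ b : Fin N, ∑ a : Fin N,
        evalM P y i a * (Wmat α δ' y a b * star (evalM Q y j b)))
        = fun y : ℝ => (evalM P y * Wmat α δ' y * (evalM Q y)ᴴ) i j :=
      funext fun y => (hexp _ _ _ i j).symm
    rw [hfun] at key
    convert key using 1
    rw [Matrix.add_apply, Matrix.add_apply, hexp, hexp, hexp]
    simp only [← Finset.sum_add_distrib]
    exact Finset.sum_congr rfl fun b _ => Finset.sum_congr rfl fun a _ => by ring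
  -- now conclude entrywise
  ext i j
  simp only [mInt, Matrix.of_apply, Matrix.neg_apply]
  simp only [hF2]
  obtain ⟨pg, hpg⟩ := hrep P Q i j
  set F₁ : ℝ → Matrix (Fin N) (Fin N) ℂ :=
    fun x => evalM (Polynomial.derivative P) x * Wmat α δ' x * (evalM Q x)ᴴ with hF₁def
  set F₂ : ℝ → Matrix (Fin N) (Fin N) ℂ :=
    fun x => evalM P x * Wmat α δ' x * (evalM (Polynomial.derivative Q) x)ᴴ
      + evalM P x * dWmat α δ' x * (evalM Q x)ᴴ with hF₂def
  have huniq : ∀ x : ℝ, (F₁ x + F₂ x) i j =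
      (Polynomial.derivative pg - Polynomial.C 2 * Polynomial.X * pg).eval (x : ℂ) * gss x := by
    intro x
    have h1 := hGder i j x
    have h2 : HasDerivAt (fun y : ℝ => (evalM P y * Wmat α δ' y * (evalM Q y)ᴴ) i j)
        ((Polynomial.derivative pg - Polynomial.C 2 * Polynomial.X * pg).eval (x : ℂ)
          * gss x) x := by
      have h3 := pg_hasDerivAt pg x
      have hfun : (fun y : ℝ => pg.eval (y : ℂ) * gss y)
          = fun y : ℝ => (evalM P y * Wmat α δ' y * (evalM Q y)ᴴ) i j :=
        funext fun y => (hpg y).symm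
      rwa [hfun] at h3
    exact h1.unique h2
  have hint1 : Integrable fun x : ℝ => F₁ x i j := by
    obtain ⟨q, hq⟩ := hrep (Polynomial.derivative P) Q i j
    exact (pg_integrable q).congr (Filter.Eventually.of_forall fun x => (hq x).symm)
  have hintsum : Integrable fun x : ℝ => (F₁ x + F₂ x) i j :=
    (pg_integrable _).congr (Filter.Eventually.of_forall fun x => (huniq x).symm)
  have hint2 : Integrable fun x : ℝ => F₂ x i j := by
    have h := hintsum.sub hint1
    refine h.congr (Filter.Eventually.of_forall fun x => ?_)
    simp [Matrix.add_apply]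
  have hzero : (∫ x : ℝ, F₁ x i j) + (∫ x : ℝ, F₂ x i j) = 0 := by
    have hadd : (∫ x : ℝ, F₁ x i j) + (∫ x : ℝ, F₂ x i j)
        = ∫ x : ℝ, (F₁ x i j + F₂ x i j) := (integral_add hint1 hint2).symm
    rw [hadd]
    exact pg_integral_deriv_zero pg _ (fun x => by rw [← Matrix.add_apply]; exact huniq x)
  exact eq_neg_of_add_eq_zero_left hzero
end
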